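/- arXiv:1902.03694 — 6 statements merged into one kernel-verified Lean document; each statement's English description precedes it below -/
import Mathlib

section
/- Let 0 < μ ≤ L, let f be μ-strongly convex with L-Lipschitz gradient on ℝⁿ, with minimizer x⋆, and let 0 < s ≤ μ/(36L²). Then the iterates of the explicit Euler scheme for the high-resolution heavy-ball ODE satisfy, for every k ≥ 0, f(x_k) − f(x⋆) ≤ ( 3sL/(1 + √(μs))² + 2μ/L + (1 + √(μs))/2 ) · L‖x₀ − x⋆‖² (1 − √(μs)/8)^k. -/
open scoped RealInnerProductSpace
open intervalIntegral MeasureTheory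

theorem descent_lemma {n : ℕ} (L : ℝ) (hL : 0 ≤ L)
    (f : EuclideanSpace ℝ (Fin n) → ℝ)
    (f' : EuclideanSpace ℝ (Fin n) → EuclideanSpace ℝ (Fin n))
    (hgrad : ∀ z, HasGradientAt f (f' z) z)
    (hLip : ∀ z w, ‖f' z - f' w‖ ≤ L * ‖z - w‖)
    (z w : EuclideanSpace ℝ (Fin n)) :
    f w ≤ f z + ⟪f' z, w - z⟫ + L / 2 * ‖w - z‖ ^ 2 := by
  set d := w - z with hd
  have hcont : Continuous f' := by
    have : LipschitzWith (Real.toNNReal L) f' := by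
      apply LipschitzWith.of_dist_le_mul
      intro p q
      rw [dist_eq_norm, dist_eq_norm, Real.coe_toNNReal L hL]
      exact hLip p q
    exact this.continuous
  have hline : ∀ t : ℝ, HasDerivAt (fun t : ℝ => f (z + t • d)) ⟪f' (z + t • d), d⟫ t := by
    intro t
    have h1 : HasDerivAt (fun t : ℝ => z + t • d) d t := by
      simpa using ((hasDerivAt_id t).smul_const d).const_add z
    have h2 := (hgrad (z + t • d)).hasFDerivAt
    have h3 := h2.comp_hasDerivAt t h1
    exact h3
  have hic : Continuous fun t : ℝ => ⟪f' (z + t • d), d⟫ := by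
    apply Continuous.inner
    · exact hcont.comp (continuous_const.add (continuous_id.smul continuous_const))
    · exact continuous_const
  have heq : ∫ t in (0:ℝ)..1, ⟪f' (z + t • d), d⟫ = f w - f z := by
    have := intervalIntegral.integral_eq_sub_of_hasDerivAt
      (f := fun t : ℝ => f (z + t • d)) (fun t _ => hline t) (hic.intervalIntegrable 0 1)
    simpa [hd] using this
  have hmono : ∫ t in (0:ℝ)..1, ⟪f' (z + t • d), d⟫ ≤
      ∫ t in (0:ℝ)..1, (⟪f' z, d⟫ + L * ‖d‖ ^ 2 * t) := by
    apply intervalIntegral.integral_mono_on (by norm_num) (hic.intervalIntegrable 0 1)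
      ((by fun_prop : Continuous fun t : ℝ => ⟪f' z, d⟫ + L * ‖d‖ ^ 2 * t).intervalIntegrable 0 1)
    intro t ht
    have h1 : ⟪f' (z + t • d) - f' z, d⟫ ≤ ‖f' (z + t • d) - f' z‖ * ‖d‖ :=
      real_inner_le_norm _ _
    have h2 : ‖f' (z + t • d) - f' z‖ ≤ L * (t * ‖d‖) := by
      have := hLip (z + t • d) z
      simpa [norm_smul, abs_of_nonneg ht.1] using this
    have h3 : ⟪f' (z + t • d) - f' z, d⟫ ≤ L * (t * ‖d‖) * ‖d‖ :=
      h1.trans (by nlinarith [norm_nonneg d, norm_nonneg (f' (z + t • d) - f' z)])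
    rw [inner_sub_left] at h3
    nlinarith [sq_nonneg ‖d‖]
  have hval : ∫ t in (0:ℝ)..1, (⟪f' z, d⟫ + L * ‖d‖ ^ 2 * t) = ⟪f' z, d⟫ + L / 2 * ‖d‖ ^ 2 := by
    rw [intervalIntegral.integral_add (intervalIntegrable_const)
      ((by fun_prop : Continuous fun t : ℝ => L * ‖d‖ ^ 2 * t).intervalIntegrable 0 1)]
    rw [intervalIntegral.integral_const, intervalIntegral.integral_const_mul, integral_id]
    simp only [smul_eq_mul, one_mul]; ring
  rw [heq] at hmono
  rw [hval] at hmono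
  linarith

theorem norm_comb {n : ℕ} (u w : EuclideanSpace ℝ (Fin n)) (c d : ℝ) :
    ‖c • u + d • w‖^2 = c^2*‖u‖^2 + 2*(c*d)*⟪u, w⟫ + d^2*‖w‖^2 := by
  rw [norm_add_sq_real, norm_smul, norm_smul, real_inner_smul_left, real_inner_smul_right,
    mul_pow, mul_pow, Real.norm_eq_abs, Real.norm_eq_abs, sq_abs, sq_abs]
  ring

theorem amgm_inner {n : ℕ} (c : ℝ) (hc : 0 ≤ c) (u w : EuclideanSpace ℝ (Fin n)) :
    c*⟪u, w⟫ ≤ ‖u‖^2/4 + c^2*‖w‖^2 := by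
  nlinarith [mul_le_mul_of_nonneg_left (real_inner_le_norm u w) hc,
    sq_nonneg (‖u‖/2 - c*‖w‖), norm_nonneg u, norm_nonneg w]


theorem key_step (m r L F Fp Fs A B G P Q R : ℝ)
    (Sa : (1+m*r)*Fp ≤ (1+m*r)*(F + r*P + L/2*(r^2*A)))
    (Sb : (m*r)*(1+m*r)*(r*P) ≤ (m*r)*(1+m*r)*(r^2*G + A/4))
    (Sc : (m*r)*(1+m*r)*(F - Fs + m^2/2*B) ≤ (m*r)*(1+m*r)*Q)
    (Sd : (r^2*(1+m*r)^2/2 + (m*r)*(1+m*r)*r^2)*G ≤ (r^2*(1+m*r)^2/2 + (m*r)*(1+m*r)*r^2)*(2*L*(F - Fs)))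
    (Sg : (m*r)/8*(m*R) ≤ (m*r)/8*(A/4 + m^2*B))
    (ScA : 0 ≤ -((1+m*r)*L*r^2/2 + (m*r)^2 - m*r + (m*r)*(1+m*r)/4 + 3/32*(m*r)) * A)
    (ScB : 0 ≤ m^2*((m*r)*(1+m*r)/2 - (m*r)/4) * B)
    (ScD : 0 ≤ (1+m*r)*(7*(m*r)/8 - L*r^2*(1+3*(m*r))) * (F - Fs)) :
    (1+m*r)*(Fp - Fs) + ((1-2*(m*r))^2*A + 2*((1-2*(m*r))*(-(r*(1+m*r))))*P + (-(r*(1+m*r)))^2*G)/4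
      + ((1:ℝ)^2*((1:ℝ)^2*A + 2*((1:ℝ)*(2*m))*R + (2*m)^2*B) + 2*((1:ℝ)*(-(r*(1+m*r))))*(P + 2*m*Q) + (-(r*(1+m*r)))^2*G)/4
    ≤ (1 - m*r/8)*((1+m*r)*(F - Fs) + A/4 + ((1:ℝ)^2*A + 2*((1:ℝ)*(2*m))*R + (2*m)^2*B)/4) := by
  linarith [Sa, Sb, Sc, Sd, Sg, ScA, ScB, ScD]


set_option maxHeartbeats 1000000 in
theorem stmt12
    {n : ℕ} (μ L : ℝ) (hμ : 0 < μ) (hμL : μ ≤ L)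
    (f : EuclideanSpace ℝ (Fin n) → ℝ)
    (f' : EuclideanSpace ℝ (Fin n) → EuclideanSpace ℝ (Fin n))
    (hgrad : ∀ z, HasGradientAt f (f' z) z)
    (hLip : ∀ z w, ‖f' z - f' w‖ ≤ L * ‖z - w‖)
    (hsc : ∀ z w, f w ≥ f z + ⟪f' z, w - z⟫ + μ / 2 * ‖w - z‖ ^ 2)
    (xstar : EuclideanSpace ℝ (Fin n)) (hmin : ∀ z, f xstar ≤ f z)
    (s : ℝ) (hs0 : 0 < s) (hs : s ≤ μ / (36 * L ^ 2))
    (x v : ℕ → EuclideanSpace ℝ (Fin n))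
    (hv0 : v 0 = -((2 * Real.sqrt s / (1 + Real.sqrt (μ * s))) • f' (x 0)))
    (hx : ∀ k : ℕ, x (k + 1) - x k = Real.sqrt s • v k)
    (hv : ∀ k : ℕ, v (k + 1) - v k = -((2 * Real.sqrt (μ * s)) • v k)
      - (Real.sqrt s * (1 + Real.sqrt (μ * s))) • f' (x k))
    : ∀ k : ℕ, f (x k) - f xstar ≤
      (3 * s * L / (1 + Real.sqrt (μ * s)) ^ 2
        + 2 * μ / L + (1 + Real.sqrt (μ * s)) / 2) *
      (L * ‖x 0 - xstar‖ ^ 2) * (1 - Real.sqrt (μ * s) / 8) ^ k := by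
  have hL0 : (0:ℝ) < L := lt_of_lt_of_le hμ hμL
  set m := Real.sqrt μ with hmdef
  set r := Real.sqrt s with hrdef
  have hm2 : m^2 = μ := Real.sq_sqrt hμ.le
  have hr2 : r^2 = s := Real.sq_sqrt hs0.le
  have hm0 : 0 < m := Real.sqrt_pos.2 hμ
  have hr0 : 0 < r := Real.sqrt_pos.2 hs0
  have haeq : Real.sqrt (μ * s) = m * r := Real.sqrt_mul hμ.le s
  have h1a : (0:ℝ) < 1 + m*r := by positivity
  have hmr2 : (m*r)^2 = μ*s := by rw [mul_pow, hm2, hr2]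
  have h36 : 36*L^2*s ≤ μ := by
    rw [le_div_iff₀ (by positivity)] at hs; linarith
  have h6Ls : 6*L*s ≤ m*r := by
    have h6 : (6*L*s)^2 ≤ (m*r)^2 := by rw [hmr2]; nlinarith [h36, hs0.le]
    have h7 := Real.sqrt_le_sqrt h6
    rwa [Real.sqrt_sq (by positivity), Real.sqrt_sq (by positivity)] at h7
  have hLs : L*r^2 ≤ m*r/6 := by rw [hr2]; linarith
  have hmr6 : m*r ≤ 1/6 := by
    have h2 : (m*r)^2*(36*L^2) ≤ L^2 := by
      rw [hmr2]
      nlinarith [mul_le_mul_of_nonneg_left h36 hμ.le, sq_nonneg (L-μ), hμ.le]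
    have h3 : (m*r)^2 ≤ 1/36 := by nlinarith [mul_pos hL0 hL0]
    nlinarith [mul_pos hm0 hr0]
  have hρ : (0:ℝ) ≤ 1 - m*r/8 := by linarith
  -- gradient at minimizer is zero
  have gstar : f' xstar = 0 := by
    have hloc : IsLocalMin f xstar := Filter.Eventually.of_forall hmin
    have h0 := hloc.hasFDerivAt_eq_zero (hgrad xstar).hasFDerivAt
    have h1 := congrArg (fun T => T (f' xstar)) h0
    simp only [ContinuousLinearMap.zero_apply] at h1
    have h2 : ⟪f' xstar, f' xstar⟫ = (0:ℝ) := by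
      simpa [InnerProductSpace.toDual_apply_apply] using h1
    exact inner_self_eq_zero.mp h2
  have hdesc := descent_lemma L hL0.le f f' hgrad hLip
  have hup : ∀ z, f z - f xstar ≤ L/2 * ‖z - xstar‖^2 := by
    intro z
    have h := hdesc xstar z
    rw [gstar, inner_zero_left] at h
    linarith
  have hgsq : ∀ z, ‖f' z‖^2 ≤ 2*L*(f z - f xstar) := by
    intro z
    have h := hdesc z (z - (1/L) • f' z)
    have h1 : z - (1/L) • f' z - z = -((1/L) • f' z) := by abel
    rw [h1, inner_neg_right, real_inner_smul_right, real_inner_self_eq_norm_sq,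
      norm_neg, norm_smul, mul_pow, Real.norm_eq_abs, sq_abs] at h
    have h2 := hmin (z - (1/L) • f' z)
    have h3 : (1/L)*‖f' z‖^2 - L/2*((1/L)^2*‖f' z‖^2) ≤ f z - f xstar := by linarith
    calc ‖f' z‖^2 = 2*L*((1/L)*‖f' z‖^2 - L/2*((1/L)^2*‖f' z‖^2)) := by
          field_simp; ring
      _ ≤ 2*L*(f z - f xstar) := by
          apply mul_le_mul_of_nonneg_left h3 (by positivity)
  -- Lyapunov function
  set E := (fun k : ℕ => (1+m*r)*(f (x k) - f xstar) + ‖v k‖^2/4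
    + ‖v k + (2*m) • (x k - xstar)‖^2/4) with hE
  have hlow : ∀ k, f (x k) - f xstar ≤ E k := by
    intro k
    have h1 := hmin (x k)
    have h2 : (0:ℝ) ≤ ‖v k‖^2 := sq_nonneg _
    have h3 : (0:ℝ) ≤ ‖v k + (2*m) • (x k - xstar)‖^2 := sq_nonneg _
    have h4 : (0:ℝ) ≤ (m*r)*(f (x k) - f xstar) :=
      mul_nonneg (by positivity) (by linarith)
    simp only [hE]
    linarith
  -- scalar coefficient sign facts
  have hcAn : (0:ℝ) ≤ -((1+m*r)*L*r^2/2 + (m*r)^2 - m*r + (m*r)*(1+m*r)/4 + 3/32*(m*r)) := by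
    nlinarith [mul_le_mul_of_nonneg_left hLs h1a.le, mul_nonneg (mul_pos hm0 hr0).le
      (sub_nonneg.2 hmr6), mul_pos hm0 hr0]
  have hcBn : (0:ℝ) ≤ m^2*((m*r)*(1+m*r)/2 - (m*r)/4) := by
    nlinarith [mul_pos hm0 hr0, sq_nonneg m, mul_nonneg (sq_nonneg m) (mul_pos hm0 hr0).le]
  have hcDn : (0:ℝ) ≤ (1+m*r)*(7*(m*r)/8 - L*r^2*(1+3*(m*r))) := by
    have h1 : L*r^2*(1+3*(m*r)) ≤ (m*r/6)*(3/2) := by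
      apply mul_le_mul hLs (by linarith) (by positivity) (by positivity)
    nlinarith [mul_pos hm0 hr0]
  -- the one-step contraction
  have hstep : ∀ k, E (k+1) ≤ (1 - m*r/8) * E k := by
    intro k
    have hx1 : x (k+1) = r • v k + x k := eq_add_of_sub_eq (hx k)
    have hv1 : v (k+1) = (1 - 2*(m*r)) • v k + (-(r*(1+m*r))) • f' (x k) := by
      have h := hv k
      rw [haeq] at h
      rw [eq_add_of_sub_eq h]; module
    have hw1 : v (k+1) + (2*m) • (x (k+1) - xstar)
        = (1:ℝ) • (v k + (2*m) • (x k - xstar)) + (-(r*(1+m*r))) • f' (x k) := by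
      rw [hv1, hx1]; module
    have hv2 : ‖v (k+1)‖^2 = (1-2*(m*r))^2*‖v k‖^2
        + 2*((1-2*(m*r))*(-(r*(1+m*r))))*⟪v k, f' (x k)⟫
        + (-(r*(1+m*r)))^2*‖f' (x k)‖^2 := by
      rw [hv1]; exact norm_comb _ _ _ _
    have hw2 : ‖v (k+1) + (2*m) • (x (k+1) - xstar)‖^2
        = (1:ℝ)^2*‖v k + (2*m) • (x k - xstar)‖^2
        + 2*((1:ℝ)*(-(r*(1+m*r))))*⟪v k + (2*m) • (x k - xstar), f' (x k)⟫
        + (-(r*(1+m*r)))^2*‖f' (x k)‖^2 := by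
      rw [hw1]; exact norm_comb _ _ _ _
    have hW : ‖v k + (2*m) • (x k - xstar)‖^2 = (1:ℝ)^2*‖v k‖^2
        + 2*((1:ℝ)*(2*m))*⟪v k, x k - xstar⟫ + (2*m)^2*‖x k - xstar‖^2 := by
      conv_lhs => rw [show v k + (2*m) • (x k - xstar)
        = (1:ℝ) • v k + (2*m) • (x k - xstar) by module]
      exact norm_comb _ _ _ _
    have hWin : ⟪v k + (2*m) • (x k - xstar), f' (x k)⟫
        = ⟪v k, f' (x k)⟫ + (2*m)*⟪x k - xstar, f' (x k)⟫ := by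
      rw [inner_add_left, real_inner_smul_left]
    have hdesck : f (x (k+1)) ≤ f (x k) + r*⟪v k, f' (x k)⟫ + L/2*(r^2*‖v k‖^2) := by
      have h := hdesc (x k) (x (k+1))
      rw [hx k, real_inner_smul_right, real_inner_comm] at h
      have hn : ‖r • v k‖^2 = r^2*‖v k‖^2 := by
        rw [norm_smul, mul_pow, Real.norm_eq_abs, sq_abs]
      rw [hn] at h
      linarith
    have hQk : f (x k) - f xstar + m^2/2*‖x k - xstar‖^2 ≤ ⟪x k - xstar, f' (x k)⟫ := by
      have h := hsc (x k) xstar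
      have h1 : xstar - x k = -(x k - xstar) := by abel
      rw [h1, inner_neg_right, norm_neg, real_inner_comm] at h
      rw [hm2]
      linarith
    have hGk := hgsq (x k)
    have hPk : r*⟪v k, f' (x k)⟫ ≤ r^2*‖f' (x k)‖^2 + ‖v k‖^2/4 := by
      have := amgm_inner r hr0.le (v k) (f' (x k)); linarith
    have hRk : m*⟪v k, x k - xstar⟫ ≤ ‖v k‖^2/4 + m^2*‖x k - xstar‖^2 :=
      amgm_inner m hm0.le (v k) (x k - xstar)
    -- scaled inequalities
    have Sa := mul_le_mul_of_nonneg_left hdesck h1a.le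
    have Sb := mul_le_mul_of_nonneg_left hPk (by positivity : (0:ℝ) ≤ (m*r)*(1+m*r))
    have Sc := mul_le_mul_of_nonneg_left hQk (by positivity : (0:ℝ) ≤ (m*r)*(1+m*r))
    have Sd := mul_le_mul_of_nonneg_left hGk
      (by positivity : (0:ℝ) ≤ r^2*(1+m*r)^2/2 + (m*r)*(1+m*r)*r^2)
    have Sg := mul_le_mul_of_nonneg_left hRk (by positivity : (0:ℝ) ≤ (m*r)/8)
    have ScA := mul_nonneg hcAn (sq_nonneg ‖v k‖)
    have ScB := mul_nonneg hcBn (sq_nonneg ‖x k - xstar‖)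
    have ScD := mul_nonneg hcDn (sub_nonneg.2 (hmin (x k)))
    simp only [hE]
    rw [hv2, hw2, hW, hWin]
    exact key_step m r L (f (x k)) (f (x (k+1))) (f xstar) (‖v k‖^2) (‖x k - xstar‖^2)
      (‖f' (x k)‖^2) ⟪v k, f' (x k)⟫ ⟪x k - xstar, f' (x k)⟫ ⟪v k, x k - xstar⟫
      Sa Sb Sc Sd Sg ScA ScB ScD
  -- initial bound
  have hg0 : ‖f' (x 0)‖ ≤ L*‖x 0 - xstar‖ := by
    have h := hLip (x 0) xstar
    rwa [gstar, sub_zero] at h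
  have hA0 : ‖v 0‖^2 = (2*r/(1+m*r))^2*‖f' (x 0)‖^2 := by
    rw [hv0, haeq, norm_neg, norm_smul, mul_pow, Real.norm_eq_abs, sq_abs]
  have hA0b : ‖v 0‖^2 ≤ (2*r/(1+m*r))^2*(L^2*‖x 0 - xstar‖^2) := by
    rw [hA0]
    apply mul_le_mul_of_nonneg_left _ (sq_nonneg _)
    calc ‖f' (x 0)‖^2 ≤ (L*‖x 0 - xstar‖)^2 :=
          pow_le_pow_left₀ (norm_nonneg _) hg0 2
      _ = L^2*‖x 0 - xstar‖^2 := by ring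
  have hW0 : ‖v 0 + (2*m) • (x 0 - xstar)‖^2 = (1:ℝ)^2*‖v 0‖^2
      + 2*((1:ℝ)*(2*m))*⟪v 0, x 0 - xstar⟫ + (2*m)^2*‖x 0 - xstar‖^2 := by
    conv_lhs => rw [show v 0 + (2*m) • (x 0 - xstar)
      = (1:ℝ) • v 0 + (2*m) • (x 0 - xstar) by module]
    exact norm_comb _ _ _ _
  have hR0 : m*⟪v 0, x 0 - xstar⟫ ≤ ‖v 0‖^2/4 + m^2*‖x 0 - xstar‖^2 :=
    amgm_inner m hm0.le (v 0) (x 0 - xstar)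
  have hΔ0 := mul_le_mul_of_nonneg_left (hup (x 0)) h1a.le
  have hE0 : E 0 ≤ (3*r^2*L^2/(1+m*r)^2 + 2*m^2 + (1+m*r)*L/2) * ‖x 0 - xstar‖^2 := by
    simp only [hE]
    rw [hW0]
    have hdiv : (3:ℝ)/4*((2*r/(1+m*r))^2*(L^2*‖x 0 - xstar‖^2))
        = 3*r^2*L^2/(1+m*r)^2*‖x 0 - xstar‖^2 := by
      field_simp
      ring
    linarith [hΔ0, hA0b, hR0, hdiv]
  -- decay
  have hdecay : ∀ k, E k ≤ E 0 * (1 - m*r/8)^k := by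
    intro k
    induction k with
    | zero => simp
    | succ k ih =>
      calc E (k+1) ≤ (1 - m*r/8) * E k := hstep k
        _ ≤ (1 - m*r/8) * (E 0 * (1 - m*r/8)^k) := mul_le_mul_of_nonneg_left ih hρ
        _ = E 0 * (1 - m*r/8)^(k+1) := by ring
  -- conclude
  intro k
  rw [haeq]
  have hCC : (3 * s * L / (1 + m*r) ^ 2 + 2 * μ / L + (1 + m*r) / 2) * (L * ‖x 0 - xstar‖ ^ 2)
      = (3*r^2*L^2/(1+m*r)^2 + 2*m^2 + (1+m*r)*L/2) * ‖x 0 - xstar‖^2 := by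
    rw [← hr2, ← hm2]
    field_simp
  rw [hCC]
  have h1 := hlow k
  have h2 := hdecay k
  have h3 := mul_le_mul_of_nonneg_right hE0 (pow_nonneg hρ k)
  calc f (x k) - f xstar ≤ E k := h1
    _ ≤ E 0 * (1 - m*r/8)^k := h2
    _ ≤ (3*r^2*L^2/(1+m*r)^2 + 2*m^2 + (1+m*r)*L/2) * ‖x 0 - xstar‖^2 * (1 - m*r/8)^k := h3
end

section
/- Let 0 < μ ≤ L, let f be μ-strongly convex with L-Lipschitz gradient on ℝⁿ, with minimizer x⋆, and let 0 < s ≤ 1/L. Then the iterates of the implicit Euler scheme for the high-resolution heavy-ball ODE satisfy, for every k ≥ 0, f(x_k) − f(x⋆) ≤ ( 3sL/(1 + √(μs))² + 2μ/L + (1 + √(μs))/2 ) · L‖x₀ − x⋆‖² / (1 + √(μs)/4)^k. -/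
open scoped RealInnerProductSpace

section hbHelpers

variable {E : Type*} [NormedAddCommGroup E] [InnerProductSpace ℝ E]

theorem hb_expand2 (c e : ℝ) (u g : E) :
    ‖c • u + e • g‖ ^ 2 = c ^ 2 * ‖u‖ ^ 2 + 2 * (c * e) * ⟪g, u⟫ + e ^ 2 * ‖g‖ ^ 2 := by
  simp [← real_inner_self_eq_norm_sq, inner_add_left, inner_add_right,
    real_inner_smul_left, real_inner_smul_right, real_inner_comm u g, -inner_self_eq_norm_sq_to_K]
  ring

theorem hb_expand3 (e : ℝ) (B g : E) :
    ‖B + e • g‖ ^ 2 = ‖B‖ ^ 2 + 2 * e * ⟪g, B⟫ + e ^ 2 * ‖g‖ ^ 2 := by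
  simp [← real_inner_self_eq_norm_sq, inner_add_left, inner_add_right,
    real_inner_smul_left, real_inner_smul_right, real_inner_comm B g, -inner_self_eq_norm_sq_to_K]
  ring

theorem hb_grad_min_zero [CompleteSpace E] (f : E → ℝ) (g x : E)
    (hg : HasGradientAt f g x) (hmin : ∀ z, f x ≤ f z) : g = 0 := by
  have h : IsLocalMin f x := isMinOn_univ_iff.mpr (fun z => hmin z) |>.isLocalMin (by simp)
  have h2 := h.hasFDerivAt_eq_zero hg.hasFDerivAt
  have h3 := congrArg (InnerProductSpace.toDual ℝ E).symm h2
  simpa using h3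

theorem hb_descent_lemma [CompleteSpace E] (L : ℝ) (f : E → ℝ) (f' : E → E)
    (hgrad : ∀ z, HasGradientAt f (f' z) z)
    (hLip : ∀ z w, ‖f' z - f' w‖ ≤ L * ‖z - w‖)
    (xs x : E) (hzero : f' xs = 0) :
    f x - f xs ≤ L / 2 * ‖x - xs‖ ^ 2 := by
  set d := x - xs with hd
  have hc : ∀ t : ℝ, HasDerivAt (fun t : ℝ => xs + t • d) d t := by
    intro t
    simpa using ((hasDerivAt_id t).smul_const d).const_add xs
  have hφ : ∀ t : ℝ, HasDerivAt (fun t => f (xs + t • d)) ⟪f' (xs + t • d), d⟫ t := by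
    intro t
    have h1 := ((hgrad (xs + t • d)).hasFDerivAt).comp_hasDerivAt t (hc t)
    simp [InnerProductSpace.toDual_apply_apply] at h1
    exact h1
  set ψ : ℝ → ℝ := fun t => L / 2 * t ^ 2 * ‖d‖ ^ 2 - f (xs + t • d) with hψdef
  have hψ : ∀ t : ℝ, HasDerivAt ψ (L * t * ‖d‖ ^ 2 - ⟪f' (xs + t • d), d⟫) t := by
    intro t
    have h2 : HasDerivAt (fun t : ℝ => L / 2 * t ^ 2 * ‖d‖ ^ 2)
        (L * t * ‖d‖ ^ 2) t := by
      have := ((hasDerivAt_pow 2 t).const_mul (L / 2)).mul_const (‖d‖ ^ 2)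
      refine this.congr_deriv ?_
      norm_num only
      ring
    exact h2.sub (hφ t)
  have hmono : MonotoneOn ψ (Set.Icc 0 1) := by
    apply monotoneOn_of_deriv_nonneg (convex_Icc 0 1)
    · exact fun t _ => (hψ t).differentiableAt.continuousAt.continuousWithinAt
    · exact fun t _ => (hψ t).differentiableAt.differentiableWithinAt
    · intro t ht
      rw [interior_Icc] at ht
      rw [(hψ t).deriv]
      have h4 : ⟪f' (xs + t • d), d⟫ ≤ ‖f' (xs + t • d)‖ * ‖d‖ := real_inner_le_norm _ _
      have h5 : ‖f' (xs + t • d)‖ ≤ L * (t * ‖d‖) := by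
        have := hLip (xs + t • d) xs
        simpa [hzero, norm_smul, abs_of_pos ht.1] using this
      nlinarith [norm_nonneg (f' (xs + t • d)), norm_nonneg d]
  have h01 := hmono (Set.mem_Icc.mpr ⟨le_refl 0, zero_le_one⟩)
    (Set.mem_Icc.mpr ⟨zero_le_one, le_refl 1⟩) zero_le_one
  simp only [hψdef] at h01
  have e0 : xs + (0:ℝ) • d = xs := by simp
  have e1 : xs + (1:ℝ) • d = x := by simp [hd]
  rw [e0, e1] at h01
  nlinarith [norm_nonneg d]

theorem hb_key_ineq (a r nu ng ny P Q R F F' : ℝ)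
    (ha : 0 < a) (hr : 0 < r) (hm : a * r ≤ 1)
    (hnu : 0 ≤ nu) (hng : 0 ≤ ng) (hny : 0 ≤ ny)
    (hP : -(ng * nu) ≤ P) (hR : R ≤ nu * ny)
    (hQ : F' + r ^ 2 / 2 * ny ^ 2 ≤ Q) (hF' : 0 ≤ F')
    (hfd : F' - F ≤ a * P - (a * r) ^ 2 / 2 * nu ^ 2) :
    (1 + a * r / 4) * (F' + nu ^ 2 / 4 + (nu ^ 2 + 4 * r * R + 4 * r ^ 2 * ny ^ 2) / 4) ≤
      F + ((1 + 2 * (a * r)) ^ 2 * nu ^ 2 + 2 * ((1 + 2 * (a * r)) * (a * (1 + a * r))) * P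
          + (a * (1 + a * r)) ^ 2 * ng ^ 2) / 4
        + (nu ^ 2 + 4 * r * R + 4 * r ^ 2 * ny ^ 2 + 2 * (a * (1 + a * r)) * (P + 2 * r * Q)
          + (a * (1 + a * r)) ^ 2 * ng ^ 2) / 4 := by
  have hm0 : 0 ≤ a * r := by positivity
  have hQ0 : 0 ≤ Q := le_trans (by positivity) hQ
  nlinarith [mul_nonneg hm0 (sq_nonneg (a * (1 + a * r) * ng - 2 * (a * r) * nu)),
    mul_nonneg hm0 (sq_nonneg (nu - r / 3 * ny)),
    mul_nonneg (mul_nonneg hm0 (sub_nonneg.mpr hm)) (sq_nonneg nu),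
    mul_nonneg hm0 (sub_nonneg.mpr hQ),
    mul_nonneg hm0 hQ0,
    mul_nonneg (mul_nonneg hm0 hr.le) (sub_nonneg.mpr hR),
    mul_nonneg (mul_nonneg (mul_nonneg hm0 ha.le) (by linarith : (0:ℝ) ≤ 2 + a * r))
      (by linarith : 0 ≤ P + ng * nu),
    mul_nonneg (mul_nonneg (mul_nonneg hm0 hm0) ha.le) (mul_nonneg hng hnu),
    mul_nonneg hm0 hF', sq_nonneg (a * r)]

end hbHelpers

set_option maxHeartbeats 2000000 in
theorem stmt13
    {n : ℕ} (μ L : ℝ) (hμ : 0 < μ) (hμL : μ ≤ L)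
    (f : EuclideanSpace ℝ (Fin n) → ℝ)
    (f' : EuclideanSpace ℝ (Fin n) → EuclideanSpace ℝ (Fin n))
    (hgrad : ∀ z, HasGradientAt f (f' z) z)
    (hLip : ∀ z w, ‖f' z - f' w‖ ≤ L * ‖z - w‖)
    (hsc : ∀ z w, f w ≥ f z + ⟪f' z, w - z⟫ + μ / 2 * ‖w - z‖ ^ 2)
    (xstar : EuclideanSpace ℝ (Fin n)) (hmin : ∀ z, f xstar ≤ f z)
    (s : ℝ) (hs0 : 0 < s) (hs : s ≤ 1 / L)
    (x v : ℕ → EuclideanSpace ℝ (Fin n))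
    (hv0 : v 0 = -((2 * Real.sqrt s / (1 + Real.sqrt (μ * s))) • f' (x 0)))
    (hx : ∀ k : ℕ, x (k + 1) - x k = Real.sqrt s • v (k + 1))
    (hv : ∀ k : ℕ, v (k + 1) - v k = -((2 * Real.sqrt (μ * s)) • v (k + 1))
      - (Real.sqrt s * (1 + Real.sqrt (μ * s))) • f' (x (k + 1)))
    : ∀ k : ℕ, f (x k) - f xstar ≤
      (3 * s * L / (1 + Real.sqrt (μ * s)) ^ 2
        + 2 * μ / L + (1 + Real.sqrt (μ * s)) / 2) *
      (L * ‖x 0 - xstar‖ ^ 2) / (1 + Real.sqrt (μ * s) / 4) ^ k := by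
  have hL : 0 < L := lt_of_lt_of_le hμ hμL
  set a : ℝ := Real.sqrt s with hadef
  set r : ℝ := Real.sqrt μ with hrdef
  have ha : 0 < a := Real.sqrt_pos.mpr hs0
  have hr : 0 < r := Real.sqrt_pos.mpr hμ
  have ha2 : a ^ 2 = s := Real.sq_sqrt hs0.le
  have hr2 : r ^ 2 = μ := Real.sq_sqrt hμ.le
  have hsqrt : Real.sqrt (μ * s) = a * r := by
    rw [Real.sqrt_mul hμ.le, mul_comm]
  rw [hsqrt] at hv0
  simp only [hsqrt] at hv ⊢
  have hm0 : 0 < a * r := by positivity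
  have hsq : (a * r) ^ 2 ≤ 1 := by
    rw [mul_pow, ha2, hr2]
    calc s * μ ≤ 1 / L * μ := mul_le_mul_of_nonneg_right hs hμ.le
      _ ≤ 1 := by
        have h1 : 1 / L * μ = μ / L := by ring
        rw [h1]
        exact (div_le_one hL).mpr hμL
  have hm1 : a * r ≤ 1 := by nlinarith [hm0, hsq]
  have hq : (0:ℝ) < 1 + a * r := by linarith
  have h14 : (0:ℝ) < 1 + a * r / 4 := by linarith
  have gstar : f' xstar = 0 := hb_grad_min_zero f (f' xstar) xstar (hgrad xstar) hmin
  set En : ℕ → ℝ := fun k =>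
    f (x k) - f xstar + ‖v k‖ ^ 2 / 4 + ‖v k + (2 * r) • (x k - xstar)‖ ^ 2 / 4 with hEn
  -- one-step contraction of the Lyapunov function
  have hstep : ∀ k : ℕ, (1 + a * r / 4) * En (k + 1) ≤ En k := by
    intro k
    simp only [hEn]
    have hvk : v k = (1 + 2 * (a * r)) • v (k + 1) + (a * (1 + a * r)) • f' (x (k + 1)) := by
      have h := hv k
      have h2 : v k = v (k + 1) - (v (k + 1) - v k) := by abel
      rw [h2, h]; module
    have hxk : x k = x (k + 1) - a • v (k + 1) := by
      have h := hx k
      have h2 : x k = x (k + 1) - (x (k + 1) - x k) := by abel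
      rw [h2, h]
    have hwk : v k + (2 * r) • (x k - xstar)
        = (v (k + 1) + (2 * r) • (x (k + 1) - xstar)) + (a * (1 + a * r)) • f' (x (k + 1)) := by
      rw [hvk, hxk]; module
    have hnvk : ‖v k‖ ^ 2 = (1 + 2 * (a * r)) ^ 2 * ‖v (k + 1)‖ ^ 2
        + 2 * ((1 + 2 * (a * r)) * (a * (1 + a * r))) * ⟪f' (x (k + 1)), v (k + 1)⟫
        + (a * (1 + a * r)) ^ 2 * ‖f' (x (k + 1))‖ ^ 2 := by
      rw [hvk]; exact hb_expand2 _ _ _ _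
    have hinner : ⟪f' (x (k + 1)), v (k + 1) + (2 * r) • (x (k + 1) - xstar)⟫
        = ⟪f' (x (k + 1)), v (k + 1)⟫ + 2 * r * ⟪f' (x (k + 1)), x (k + 1) - xstar⟫ := by
      rw [inner_add_right, real_inner_smul_right]
    have hnwk : ‖v k + (2 * r) • (x k - xstar)‖ ^ 2
        = ‖v (k + 1) + (2 * r) • (x (k + 1) - xstar)‖ ^ 2
          + 2 * (a * (1 + a * r)) * (⟪f' (x (k + 1)), v (k + 1)⟫
            + 2 * r * ⟪f' (x (k + 1)), x (k + 1) - xstar⟫)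
          + (a * (1 + a * r)) ^ 2 * ‖f' (x (k + 1))‖ ^ 2 := by
      rw [hwk, hb_expand3, hinner]
    have hnw1 : ‖v (k + 1) + (2 * r) • (x (k + 1) - xstar)‖ ^ 2
        = ‖v (k + 1)‖ ^ 2 + 4 * r * ⟪v (k + 1), x (k + 1) - xstar⟫
          + 4 * r ^ 2 * ‖x (k + 1) - xstar‖ ^ 2 := by
      rw [hb_expand3]
      rw [real_inner_comm (x (k + 1) - xstar) (v (k + 1))]
      ring
    have hxd : x k - x (k + 1) = -(a • v (k + 1)) := by
      rw [← neg_sub, hx k]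
    have hfd : f (x (k + 1)) - f xstar - (f (x k) - f xstar)
        ≤ a * ⟪f' (x (k + 1)), v (k + 1)⟫ - (a * r) ^ 2 / 2 * ‖v (k + 1)‖ ^ 2 := by
      have h := hsc (x (k + 1)) (x k)
      rw [hxd, inner_neg_right, real_inner_smul_right, norm_neg, norm_smul,
        Real.norm_eq_abs, abs_of_pos ha] at h
      have heq : μ / 2 * (a * ‖v (k + 1)‖) ^ 2 = (a * r) ^ 2 / 2 * ‖v (k + 1)‖ ^ 2 := by
        rw [← hr2]; ring
      linarith [h, heq]
    have hQ : f (x (k + 1)) - f xstar + r ^ 2 / 2 * ‖x (k + 1) - xstar‖ ^ 2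
        ≤ ⟪f' (x (k + 1)), x (k + 1) - xstar⟫ := by
      have h := hsc (x (k + 1)) xstar
      have hxs : xstar - x (k + 1) = -(x (k + 1) - xstar) := by rw [neg_sub]
      rw [hxs, inner_neg_right, norm_neg] at h
      have heq : μ / 2 * ‖x (k + 1) - xstar‖ ^ 2 = r ^ 2 / 2 * ‖x (k + 1) - xstar‖ ^ 2 := by
        rw [hr2]
      linarith [h, heq, hmin (x (k + 1))]
    have hF' : 0 ≤ f (x (k + 1)) - f xstar := sub_nonneg.mpr (hmin _)
    have hP : -(‖f' (x (k + 1))‖ * ‖v (k + 1)‖) ≤ ⟪f' (x (k + 1)), v (k + 1)⟫ :=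
      (abs_le.mp (abs_real_inner_le_norm _ _)).1
    have hR : ⟪v (k + 1), x (k + 1) - xstar⟫ ≤ ‖v (k + 1)‖ * ‖x (k + 1) - xstar‖ :=
      real_inner_le_norm _ _
    have hkey := hb_key_ineq a r ‖v (k + 1)‖ ‖f' (x (k + 1))‖ ‖x (k + 1) - xstar‖
      ⟪f' (x (k + 1)), v (k + 1)⟫ ⟪f' (x (k + 1)), x (k + 1) - xstar⟫
      ⟪v (k + 1), x (k + 1) - xstar⟫
      (f (x k) - f xstar) (f (x (k + 1)) - f xstar)
      ha hr hm1 (norm_nonneg _) (norm_nonneg _) (norm_nonneg _) hP hR hQ hF' hfd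
    rw [hnvk, hnwk, hnw1]
    linarith [hkey]
  -- bound on the initial value of the Lyapunov function
  have hng0 : ‖f' (x 0)‖ ≤ L * ‖x 0 - xstar‖ := by
    have h := hLip (x 0) xstar
    rwa [gstar, sub_zero] at h
  have hF0 : f (x 0) - f xstar ≤ L / 2 * ‖x 0 - xstar‖ ^ 2 :=
    hb_descent_lemma L f f' hgrad hLip xstar (x 0) gstar
  have hE0 : En 0 ≤ (3 * s * L / (1 + a * r) ^ 2 + 2 * μ / L + (1 + a * r) / 2)
      * (L * ‖x 0 - xstar‖ ^ 2) := by
    simp only [hEn]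
    have hc : (0:ℝ) < 2 * a / (1 + a * r) := by positivity
    have hnv0 : ‖v 0‖ ^ 2 = 4 * s * ‖f' (x 0)‖ ^ 2 / (1 + a * r) ^ 2 := by
      rw [hv0, norm_neg, norm_smul, Real.norm_eq_abs, abs_of_pos hc, ← ha2]
      field_simp
      ring
    have hw0 : v 0 + (2 * r) • (x 0 - xstar)
        = (2 * r) • (x 0 - xstar) + (-(2 * a / (1 + a * r))) • f' (x 0) := by
      rw [hv0]; module
    have hnw0 : ‖v 0 + (2 * r) • (x 0 - xstar)‖ ^ 2
        = 4 * r ^ 2 * ‖x 0 - xstar‖ ^ 2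
          - 8 * a * r * ⟪f' (x 0), x 0 - xstar⟫ / (1 + a * r)
          + 4 * s * ‖f' (x 0)‖ ^ 2 / (1 + a * r) ^ 2 := by
      rw [hw0, hb_expand2 (2 * r) (-(2 * a / (1 + a * r))) (x 0 - xstar) (f' (x 0)), ← ha2]
      field_simp
      ring
    have hQ0 : f (x 0) - f xstar + r ^ 2 / 2 * ‖x 0 - xstar‖ ^ 2
        ≤ ⟪f' (x 0), x 0 - xstar⟫ := by
      have h := hsc (x 0) xstar
      have hxs : xstar - x 0 = -(x 0 - xstar) := by rw [neg_sub]
      rw [hxs, inner_neg_right, norm_neg] at h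
      have heq : μ / 2 * ‖x 0 - xstar‖ ^ 2 = r ^ 2 / 2 * ‖x 0 - xstar‖ ^ 2 := by rw [hr2]
      linarith [h, heq, hmin (x 0)]
    have hQ00 : 0 ≤ ⟪f' (x 0), x 0 - xstar⟫ := by
      have h1 : 0 ≤ f (x 0) - f xstar := sub_nonneg.mpr (hmin _)
      have h2 : 0 ≤ r ^ 2 / 2 * ‖x 0 - xstar‖ ^ 2 := by positivity
      linarith
    have hng2 : ‖f' (x 0)‖ ^ 2 ≤ L ^ 2 * ‖x 0 - xstar‖ ^ 2 := by
      nlinarith [norm_nonneg (f' (x 0)), norm_nonneg (x 0 - xstar)]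
    have ht2 : 4 * s * ‖f' (x 0)‖ ^ 2 / (1 + a * r) ^ 2
        ≤ 4 * s * (L ^ 2 * ‖x 0 - xstar‖ ^ 2) / (1 + a * r) ^ 2 :=
      (div_le_div_iff_of_pos_right (by positivity : (0:ℝ) < (1 + a * r) ^ 2)).mpr
        (mul_le_mul_of_nonneg_left hng2 (by linarith : (0:ℝ) ≤ 4 * s))
    have hpos1 : 0 ≤ s * (L ^ 2 * ‖x 0 - xstar‖ ^ 2) / (1 + a * r) ^ 2 := by positivity
    have hRHSeq : (3 * s * L / (1 + a * r) ^ 2 + 2 * μ / L + (1 + a * r) / 2)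
        * (L * ‖x 0 - xstar‖ ^ 2)
        = 3 * (s * (L ^ 2 * ‖x 0 - xstar‖ ^ 2) / (1 + a * r) ^ 2)
          + 2 * μ * ‖x 0 - xstar‖ ^ 2
          + (1 + a * r) * (L * ‖x 0 - xstar‖ ^ 2) / 2 := by
      field_simp
    have hμY : r ^ 2 * ‖x 0 - xstar‖ ^ 2 = μ * ‖x 0 - xstar‖ ^ 2 := by rw [hr2]
    have hcross : 0 ≤ 8 * a * r * ⟪f' (x 0), x 0 - xstar⟫ / (1 + a * r) := by
      apply div_nonneg _ hq.le
      exact mul_nonneg (by positivity) hQ00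
    have hqLY : L * ‖x 0 - xstar‖ ^ 2 ≤ (1 + a * r) * (L * ‖x 0 - xstar‖ ^ 2) := by
      have h1 : (1:ℝ) ≤ 1 + a * r := by linarith [mul_pos ha hr]
      exact le_mul_of_one_le_left (by positivity) h1
    have hμY2 : 0 ≤ μ * ‖x 0 - xstar‖ ^ 2 := by positivity
    rw [hnv0, hnw0, hRHSeq]
    ring_nf at hF0 ht2 hμY hcross hpos1 hqLY hμY2 ⊢
    linarith [hF0, ht2, hμY, hcross, hpos1, hqLY, hμY2]
  -- iterate the contraction
  intro k
  have hEk : En k ≤ (3 * s * L / (1 + a * r) ^ 2 + 2 * μ / L + (1 + a * r) / 2)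
      * (L * ‖x 0 - xstar‖ ^ 2) / (1 + a * r / 4) ^ k := by
    induction k with
    | zero => simpa using hE0
    | succ k ih =>
      have h1 : En (k + 1) ≤ En k / (1 + a * r / 4) := by
        rw [le_div_iff₀ h14]
        linarith [hstep k]
      have h2 := (div_le_div_iff_of_pos_right h14).mpr ih
      calc En (k + 1) ≤ _ := h1
        _ ≤ _ := h2
        _ = _ := by rw [div_div, ← pow_succ]
  have hfE : f (x k) - f xstar ≤ En k := by
    simp only [hEn]
    have h1 := sq_nonneg ‖v k‖
    have h2 := sq_nonneg ‖v k + (2 * r) • (x k - xstar)‖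
    linarith
  exact le_trans hfE hEk
end

section
/- Let 0 < μ ≤ L, let f be μ-strongly convex with L-Lipschitz gradient on ℝⁿ, with minimizer x⋆. Let X : [0, ∞) → ℝⁿ be twice differentiable with X(0) = x₀, X'(0) = 0, and X''(t) + 2√μ X'(t) + ∇f(X(t)) = 0 for all t ≥ 0. Then for all t ≥ 0, f(X(t)) − f(x⋆) ≤ (3L/2)‖x₀ − x⋆‖² e^{−√μ t / 4}. -/
set_option maxHeartbeats 1000000

open scoped RealInnerProductSpace

theorem stmt14
    {n : ℕ} (μ L : ℝ) (hμ : 0 < μ) (hμL : μ ≤ L)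
    (f : EuclideanSpace ℝ (Fin n) → ℝ)
    (f' : EuclideanSpace ℝ (Fin n) → EuclideanSpace ℝ (Fin n))
    (hgrad : ∀ z, HasGradientAt f (f' z) z)
    (hLip : ∀ z w, ‖f' z - f' w‖ ≤ L * ‖z - w‖)
    (hsc : ∀ z w, f w ≥ f z + ⟪f' z, w - z⟫ + μ / 2 * ‖w - z‖ ^ 2)
    (xstar : EuclideanSpace ℝ (Fin n)) (hmin : ∀ z, f xstar ≤ f z)
    (x0 : EuclideanSpace ℝ (Fin n))
    (X X' X'' : ℝ → EuclideanSpace ℝ (Fin n))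
    (hX : ∀ t ∈ Set.Ici (0 : ℝ), HasDerivWithinAt X (X' t) (Set.Ici 0) t)
    (hX' : ∀ t ∈ Set.Ici (0 : ℝ), HasDerivWithinAt X' (X'' t) (Set.Ici 0) t)
    (hX0 : X 0 = x0) (hV0 : X' 0 = 0)
    (hODE : ∀ t ∈ Set.Ici (0 : ℝ),
      X'' t + (2 * Real.sqrt μ) • X' t + f' (X t) = 0)
    : ∀ t ∈ Set.Ici (0 : ℝ),
      f (X t) - f xstar ≤ 3 * L / 2 * ‖x0 - xstar‖ ^ 2 * Real.exp (-(Real.sqrt μ * t) / 4) := by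
  set s := Real.sqrt μ with hsdef
  have hspos : 0 < s := Real.sqrt_pos.mpr hμ
  have hs2 : s ^ 2 = μ := Real.sq_sqrt hμ.le
  -- gradient vanishes at the minimizer
  have hgz : f' xstar = 0 := by
    have h1 : IsLocalMin f xstar := Filter.Eventually.of_forall hmin
    have h2 := h1.hasFDerivAt_eq_zero (hgrad xstar).hasFDerivAt
    have h3 := congrArg (fun l => (InnerProductSpace.toDual ℝ (EuclideanSpace ℝ (Fin n))).symm l) h2
    simpa using h3
  -- Lyapunov function
  set W : ℝ → EuclideanSpace ℝ (Fin n) := fun t => X' t + s • (X t - xstar) with hWdef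
  set En : ℝ → ℝ := fun t =>
    f (X t) - f xstar + 1/4 * ⟪X' t, X' t⟫ + 1/4 * ⟪W t, W t⟫ with hEndef
  set e' : ℝ → ℝ := fun t =>
    ⟪f' (X t), X' t⟫ + 1/4 * (⟪X' t, X'' t⟫ + ⟪X'' t, X' t⟫)
      + 1/4 * (⟪W t, X'' t + s • X' t⟫ + ⟪X'' t + s • X' t, W t⟫) with he'def
  have hEd : ∀ t ∈ Set.Ici (0 : ℝ), HasDerivWithinAt En (e' t) (Set.Ici 0) t := by
    intro t ht
    have hfX : HasDerivWithinAt (fun t => f (X t)) ⟪f' (X t), X' t⟫ (Set.Ici 0) t := by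
      have := (hgrad (X t)).hasFDerivAt.comp_hasDerivWithinAt t (hX t ht)
      simpa [InnerProductSpace.toDual_apply_apply, Function.comp_def] using this
    have h1 : HasDerivWithinAt (fun t => ⟪X' t, X' t⟫)
        (⟪X' t, X'' t⟫ + ⟪X'' t, X' t⟫) (Set.Ici 0) t :=
      (hX' t ht).inner ℝ (hX' t ht)
    have hWd : HasDerivWithinAt W (X'' t + s • X' t) (Set.Ici 0) t :=
      (hX' t ht).add (((hX t ht).sub_const xstar).const_smul s)
    have h2 : HasDerivWithinAt (fun t => ⟪W t, W t⟫)
        (⟪W t, X'' t + s • X' t⟫ + ⟪X'' t + s • X' t, W t⟫) (Set.Ici 0) t :=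
      hWd.inner ℝ hWd
    exact ((hfX.sub_const (f xstar)).add (h1.const_mul (1/4))).add (h2.const_mul (1/4))
  -- key differential inequality
  have hkey : ∀ t ∈ Set.Ici (0 : ℝ), e' t + s/4 * En t ≤ 0 := by
    intro t ht
    have ha : X'' t = -((2*s) • X' t) - f' (X t) := by
      have h := hODE t ht
      rw [add_assoc] at h
      rw [eq_neg_of_add_eq_zero_left h]
      abel
    have hΔ : 0 ≤ f (X t) - f xstar := sub_nonneg.mpr (hmin (X t))
    have hsc' : f (X t) - f xstar + μ/2 * ‖X t - xstar‖^2 ≤ ⟪f' (X t), X t - xstar⟫ := by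
      have h := hsc (X t) xstar
      have h2 : ⟪f' (X t), xstar - X t⟫ = -⟪f' (X t), X t - xstar⟫ := by
        rw [show xstar - X t = -(X t - xstar) by abel, inner_neg_right]
      rw [h2, norm_sub_rev] at h
      linarith
    set w : EuclideanSpace ℝ (Fin n) := X t - xstar with hw
    have hvv : ⟪X' t, X' t⟫ = ‖X' t‖^2 := real_inner_self_eq_norm_sq _
    have hww : ⟪w, w⟫ = ‖w‖^2 := real_inner_self_eq_norm_sq _
    have habs' : -(‖X' t‖ * ‖w‖) ≤ ⟪X' t, w⟫ :=
      le_trans (neg_le_neg (abs_real_inner_le_norm _ _)) (neg_abs_le _)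
    have hA : 0 ≤ s * (⟪f' (X t), w⟫ - (f (X t) - f xstar) - s^2/2 * ‖w‖^2) := by
      apply mul_nonneg hspos.le
      rw [hs2]; linarith
    have hB : 0 ≤ s^2 * (⟪X' t, w⟫ + ‖X' t‖ * ‖w‖) :=
      mul_nonneg (sq_nonneg s) (by linarith)
    have hC : 0 ≤ s * (‖X' t‖ - s * ‖w‖)^2 := mul_nonneg hspos.le (sq_nonneg _)
    have hD : 0 ≤ s * (f (X t) - f xstar) := mul_nonneg hspos.le hΔ
    have hx2 : 0 ≤ s * ‖X' t‖^2 := mul_nonneg hspos.le (sq_nonneg _)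
    simp only [he'def, hEndef, hWdef, ha, ← hw]
    simp only [inner_add_left, inner_add_right, inner_neg_left, inner_neg_right,
      inner_sub_left, inner_sub_right, real_inner_smul_left, real_inner_smul_right]
    simp only [hvv, hww]
    rw [real_inner_comm (X' t) (f' (X t)), real_inner_comm (X' t) w,
      real_inner_comm (f' (X t)) w]
    nlinarith [hA, hB, hC, hD, hx2]
  -- the rescaled function is antitone
  set G : ℝ → ℝ := fun t => En t * Real.exp (s * t / 4) with hGdef
  have hGd : ∀ t ∈ Set.Ici (0 : ℝ),
      HasDerivWithinAt G ((e' t + s/4 * En t) * Real.exp (s * t / 4)) (Set.Ici 0) t := by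
    intro t ht
    have hexp : HasDerivAt (fun t => Real.exp (s * t / 4)) (Real.exp (s * t / 4) * (s/4)) t := by
      have h1 : HasDerivAt (fun t : ℝ => s * t / 4) (s/4) t := by
        simpa using ((hasDerivAt_id t).const_mul s).div_const 4
      exact h1.exp
    have := (hEd t ht).mul hexp.hasDerivWithinAt
    exact this.congr_deriv (by ring)
  have hGanti : AntitoneOn G (Set.Ici 0) := by
    apply antitoneOn_of_deriv_nonpos (convex_Ici 0)
    · exact fun t ht => (hGd t ht).continuousWithinAt
    · rw [interior_Ici]
      exact fun t ht => ((hGd t (Set.mem_Ici.mpr (le_of_lt ht))).hasDerivAt (Ici_mem_nhds ht)).differentiableAt.differentiableWithinAt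
    · intro t ht
      rw [interior_Ici] at ht
      rw [((hGd t (Set.mem_Ici.mpr ht.le)).hasDerivAt (Ici_mem_nhds ht)).deriv]
      exact mul_nonpos_of_nonpos_of_nonneg (hkey t (Set.mem_Ici.mpr ht.le)) (Real.exp_pos _).le
  -- initial value bound
  have hE0 : En 0 ≤ 3 * L / 2 * ‖x0 - xstar‖ ^ 2 := by
    have h0 : f x0 - f xstar ≤ L * ‖x0 - xstar‖^2 := by
      have h := hsc x0 xstar
      have h2 : ⟪f' x0, xstar - x0⟫ = -⟪f' x0, x0 - xstar⟫ := by
        rw [show xstar - x0 = -(x0 - xstar) by abel, inner_neg_right]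
      rw [h2, norm_sub_rev] at h
      have hnrm : ‖f' x0‖ ≤ L * ‖x0 - xstar‖ := by
        have := hLip x0 xstar
        simpa [hgz] using this
      have hcs : ⟪f' x0, x0 - xstar⟫ ≤ ‖f' x0‖ * ‖x0 - xstar‖ := real_inner_le_norm _ _
      nlinarith [norm_nonneg (x0 - xstar), sq_nonneg ‖x0 - xstar‖, mul_pos hμ hμ,
        mul_nonneg (norm_nonneg (x0 - xstar)) (norm_nonneg (x0 - xstar))]
    have hEn0 : En 0 = f x0 - f xstar + 1/4 * (s^2 * ‖x0 - xstar‖^2) := by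
      simp only [hEndef, hWdef, hX0, hV0, zero_add, inner_zero_left, mul_zero, add_zero]
      rw [real_inner_smul_left, real_inner_smul_right, real_inner_self_eq_norm_sq]
      ring
    rw [hEn0, hs2]
    nlinarith [sq_nonneg ‖x0 - xstar‖]
  -- conclude
  intro t ht
  have hGle : G t ≤ G 0 := hGanti (Set.self_mem_Ici) ht ht
  have hG0 : G 0 = En 0 := by simp [hGdef]
  have h3 : En t ≤ En 0 * Real.exp (-(s*t)/4) := by
    rw [show -(s*t)/4 = -(s*t/4) by ring, Real.exp_neg, ← div_eq_mul_inv,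
      le_div_iff₀ (Real.exp_pos _)]
    rw [hG0] at hGle
    exact hGle
  have h4 : f (X t) - f xstar ≤ En t := by
    have h5 : (0:ℝ) ≤ ⟪X' t, X' t⟫ := real_inner_self_nonneg
    have h6 : (0:ℝ) ≤ ⟪W t, W t⟫ := real_inner_self_nonneg
    simp only [hEndef]
    linarith
  calc f (X t) - f xstar ≤ En t := h4
    _ ≤ En 0 * Real.exp (-(s*t)/4) := h3
    _ ≤ 3 * L / 2 * ‖x0 - xstar‖ ^ 2 * Real.exp (-(s * t) / 4) :=
        mul_le_mul_of_nonneg_right hE0 (Real.exp_pos _).le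
end

section
/- Let 0 < μ ≤ L, let f be μ-strongly convex with L-Lipschitz gradient on ℝⁿ, with minimizer x⋆, and let 0 < s ≤ μ/(25L²). Then the iterates of the explicit Euler scheme for the low-resolution strongly convex ODE satisfy, for every k ≥ 0, f(x_k) − f(x⋆) ≤ (3L‖x₀ − x⋆‖²/2) (1 − √(μs)/8)^k. -/
set_option maxHeartbeats 1000000

open scoped RealInnerProductSpace

theorem descent_aux {n : ℕ} (L : ℝ)
    (f : EuclideanSpace ℝ (Fin n) → ℝ) (f' : EuclideanSpace ℝ (Fin n) → EuclideanSpace ℝ (Fin n))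
    (hgrad : ∀ z, HasGradientAt f (f' z) z)
    (hLip : ∀ z w, ‖f' z - f' w‖ ≤ L * ‖z - w‖) (z w : EuclideanSpace ℝ (Fin n)) :
    f w ≤ f z + ⟪f' z, w - z⟫ + L / 2 * ‖w - z‖ ^ 2 := by
  set d := w - z with hd
  set g : ℝ → ℝ := fun t => f (z + t • d) - t * ⟪f' z, d⟫ - L / 2 * t ^ 2 * ‖d‖ ^ 2 with hg
  have hder : ∀ t : ℝ, HasDerivAt g (⟪f' (z + t • d), d⟫ - ⟪f' z, d⟫ - L * t * ‖d‖ ^ 2) t := by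
    intro t
    have hc : HasDerivAt (fun t : ℝ => z + t • d) d t := by
      simpa using ((hasDerivAt_id t).smul_const d).const_add z
    have h1 : HasDerivAt (fun t : ℝ => f (z + t • d)) ⟪f' (z + t • d), d⟫ t := by
      have h0 := (hgrad (z + t • d)).hasFDerivAt.comp_hasDerivAt t hc
      simp at h0
      exact h0
    have h2 : HasDerivAt (fun t : ℝ => t * ⟪f' z, d⟫) ⟪f' z, d⟫ t := by
      simpa using (hasDerivAt_id t).mul_const (⟪f' z, d⟫ : ℝ)
    have h3 : HasDerivAt (fun t : ℝ => L / 2 * t ^ 2 * ‖d‖ ^ 2) (L * t * ‖d‖ ^ 2) t := by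
      have := ((hasDerivAt_pow 2 t).const_mul (L / 2)).mul_const (‖d‖ ^ 2)
      refine this.congr_deriv ?_
      rw [show (2:ℕ) - 1 = 1 from rfl]
      push_cast
      ring
    have h0 := (h1.sub h2).sub h3
    exact h0
  have hanti : AntitoneOn g (Set.Icc 0 1) := by
    apply antitoneOn_of_deriv_nonpos (convex_Icc 0 1)
    · exact Continuous.continuousOn (by
        exact (fun t => (hder t).differentiableAt) |> fun h => Differentiable.continuous h)
    · intro t ht
      exact (hder t).differentiableAt.differentiableWithinAt
    · intro t ht
      rw [interior_Icc] at ht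
      rw [(hder t).deriv]
      have h1 : ⟪f' (z + t • d) - f' z, d⟫ ≤ ‖f' (z + t • d) - f' z‖ * ‖d‖ :=
        real_inner_le_norm _ _
      have h2 : ‖f' (z + t • d) - f' z‖ ≤ L * ‖t • d‖ := by
        have := hLip (z + t • d) z
        simpa using this
      have h3 : ‖t • d‖ = t * ‖d‖ := by
        rw [norm_smul, Real.norm_eq_abs, abs_of_pos ht.1]
      have h4 : ⟪f' (z + t • d) - f' z, d⟫ = ⟪f' (z + t • d), d⟫ - ⟪f' z, d⟫ := by
        rw [inner_sub_left]
      rw [h3] at h2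
      nlinarith [norm_nonneg d, h1, mul_le_mul_of_nonneg_right h2 (norm_nonneg d)]
  have h01 : g 1 ≤ g 0 := hanti (by norm_num) (by norm_num) (by norm_num)
  have e0 : g 0 = f z := by simp [hg]
  have hzd : z + d = w := by rw [hd]; abel
  have e1 : g 1 = f w - ⟪f' z, d⟫ - L / 2 * ‖d‖ ^ 2 := by
    simp [hg, hzd]
  rw [e0, e1] at h01
  linarith

theorem gradsq_aux {n : ℕ} (L : ℝ) (hL0 : 0 < L)
    (f : EuclideanSpace ℝ (Fin n) → ℝ) (f' : EuclideanSpace ℝ (Fin n) → EuclideanSpace ℝ (Fin n))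
    (hgrad : ∀ z, HasGradientAt f (f' z) z)
    (hLip : ∀ z w, ‖f' z - f' w‖ ≤ L * ‖z - w‖)
    (xstar : EuclideanSpace ℝ (Fin n)) (hmin : ∀ z, f xstar ≤ f z)
    (z : EuclideanSpace ℝ (Fin n)) :
    ‖f' z‖ ^ 2 ≤ 2 * L * (f z - f xstar) := by
  have hL' : L ≠ 0 := ne_of_gt hL0
  have hd := descent_aux L f f' hgrad hLip z (z + (-(1/L)) • f' z)
  have e0 : (z + (-(1/L)) • f' z) - z = (-(1/L)) • f' z := by abel
  rw [e0] at hd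
  have e1 : ⟪f' z, (-(1/L)) • f' z⟫ = -(1/L) * ‖f' z‖^2 := by
    rw [real_inner_smul_right, real_inner_self_eq_norm_sq]
  have e2 : ‖(-(1/L)) • f' z‖^2 = (1/L)^2 * ‖f' z‖^2 := by
    rw [norm_smul, Real.norm_eq_abs, abs_neg, abs_of_pos (by positivity : (0:ℝ) < 1/L)]
    ring
  rw [e1, e2] at hd
  have h1 := hmin (z + (-(1/L)) • f' z)
  have key : f xstar ≤ f z - 1/2 * (1/L) * ‖f' z‖^2 := by
    have e3 : L/2 * ((1/L)^2 * ‖f' z‖^2) = 1/2 * (1/L) * ‖f' z‖^2 := by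
      field_simp
    nlinarith [hd, h1]
  have h2 := mul_le_mul_of_nonneg_left key (by positivity : (0:ℝ) ≤ 2*L)
  have e4 : 2*L*(f z - 1/2 * (1/L) * ‖f' z‖^2) = 2*L*f z - ‖f' z‖^2 := by
    field_simp
  nlinarith [h2]

theorem key_scalar (μ L sμ h m U V G q r p a a' nu nv ng : ℝ)
    (hμ : 0 < μ) (hμL : μ ≤ L) (hsμ : 0 < sμ) (hsμ2 : sμ ^ 2 = μ)
    (hh : 0 < h) (hm : m = sμ * h) (hLh : L * h ≤ sμ / 5)
    (hU : U = nu ^ 2) (hV : V = nv ^ 2) (hG : G = ng ^ 2)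
    (hnu : 0 ≤ nu) (hnv : 0 ≤ nv) (hng : 0 ≤ ng)
    (ha1 : a + μ / 2 * U ≤ q) (ha2 : μ / 2 * U ≤ a) (ha3 : G ≤ 2 * L * a)
    (hr : r ≤ nu * nv) (hp : p ≤ ng * nv) (hgu : ng ≤ L * nu)
    (hstep : a' ≤ a + h * p + L * h ^ 2 / 2 * V) :
    a' + (1/2) * ((1 - 2*m)^2 * V - 2 * (1 - 2*m) * (h*p) + h^2 * G)
      + sμ * ((1 - 2*m) * (r + h * V) - h * (q + h * p))
      + μ * (U + 2 * h * r + h^2 * V)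
    ≤ (1 - m/8) * (a + (1/2) * V + sμ * r + μ * U) := by
  subst hm
  subst hsμ2
  subst hU
  subst hV
  subst hG
  have hL0 : 0 < L := lt_of_lt_of_le hμ hμL
  have hm0 : 0 < sμ * h := mul_pos hsμ hh
  have hm15 : sμ * h ≤ 1/5 := by
    have h1 : L * (sμ * h) ≤ sμ ^ 2 / 5 := by nlinarith
    nlinarith
  have hLh2 : L * h ^ 2 ≤ (sμ * h) / 5 := by nlinarith
  have hVnn : (0:ℝ) ≤ nv^2 := by positivity
  have hGnn : (0:ℝ) ≤ ng^2 := by positivity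
  have hUnn : (0:ℝ) ≤ nu^2 := by positivity
  have hG2 : ng^2 ≤ 2 * L * q - L * sμ^2 * nu^2 := by nlinarith
  have T1 : h^2/2 * ng^2 ≤ (sμ*h)/10 * (2*q - sμ^2*nu^2) := by
    have h6 : L * (h^2/2 * ng^2) ≤ L * ((sμ*h)/10 * (2*q - sμ^2*nu^2)) := by
      nlinarith [mul_le_mul_of_nonneg_right hLh2 hGnn,
        mul_le_mul_of_nonneg_left hG2 (by positivity : (0:ℝ) ≤ sμ*h/10)]
    exact le_of_mul_le_mul_left h6 hL0
  have hsr : sμ * r ≤ (sμ^2*nu^2 + nv^2)/2 := by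
    linarith [sq_nonneg (sμ*nu - nv), mul_le_mul_of_nonneg_left hr hsμ.le]
  have T2 : sμ * ((sμ*h)/8) * r ≤ (sμ*h)/16 * (sμ^2*nu^2 + nv^2) := by
    have := mul_le_mul_of_nonneg_left hsr (by positivity : (0:ℝ) ≤ (sμ*h)/8)
    linarith
  have hpL : p ≤ L * nu * nv := by nlinarith [mul_le_mul_of_nonneg_right hgu hnv]
  have hhp : h * p ≤ (sμ^2*nu^2 + nv^2)/10 := by
    have h1 : h * p ≤ h * (L * nu * nv) := by nlinarith
    have h2 : h * L * (nu * nv) ≤ (sμ/5) * (nu*nv) := by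
      nlinarith [mul_le_mul_of_nonneg_right hLh (mul_nonneg hnu hnv)]
    nlinarith [sq_nonneg (sμ*nu - nv)]
  have T3 : (sμ*h) * (h*p) ≤ (sμ*h)/10 * (sμ^2*nu^2 + nv^2) := by
    have := mul_le_mul_of_nonneg_left hhp hm0.le
    linarith
  have hq : (sμ*h) * (q - sμ^2*nu^2) ≥ 0 := by
    apply mul_nonneg hm0.le; nlinarith
  have ha1m : (sμ*h) * (q - a - sμ^2/2*nu^2) ≥ 0 := by
    apply mul_nonneg hm0.le; nlinarith
  have hV1 : (sμ*h)^2 * nv^2 ≤ ((sμ*h)/5) * nv^2 :=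
    mul_le_mul_of_nonneg_right (by nlinarith) hVnn
  have hV2 : L * h^2 * nv^2 ≤ ((sμ*h)/5) * nv^2 :=
    mul_le_mul_of_nonneg_right hLh2 hVnn
  have hmU : 0 ≤ (sμ*h) * (sμ^2 * nu^2) := by positivity
  have hmV : 0 ≤ (sμ*h) * nv^2 := by positivity
  linarith [T1, T2, T3, hq, ha1m, hV1, hV2, hstep, hVnn, hmU, hmV]

theorem stmt16
    {n : ℕ} (μ L : ℝ) (hμ : 0 < μ) (hμL : μ ≤ L)
    (f : EuclideanSpace ℝ (Fin n) → ℝ)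
    (f' : EuclideanSpace ℝ (Fin n) → EuclideanSpace ℝ (Fin n))
    (hgrad : ∀ z, HasGradientAt f (f' z) z)
    (hLip : ∀ z w, ‖f' z - f' w‖ ≤ L * ‖z - w‖)
    (hsc : ∀ z w, f w ≥ f z + ⟪f' z, w - z⟫ + μ / 2 * ‖w - z‖ ^ 2)
    (xstar : EuclideanSpace ℝ (Fin n)) (hmin : ∀ z, f xstar ≤ f z)
    (s : ℝ) (hs0 : 0 < s) (hs : s ≤ μ / (25 * L ^ 2))
    (x v : ℕ → EuclideanSpace ℝ (Fin n))
    (hv0 : v 0 = 0)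
    (hx : ∀ k : ℕ, x (k + 1) - x k = Real.sqrt s • v k)
    (hv : ∀ k : ℕ, v (k + 1) - v k = -((2 * Real.sqrt (μ * s)) • v k)
      - Real.sqrt s • f' (x k))
    : ∀ k : ℕ, f (x k) - f xstar ≤ 3 * L * ‖x 0 - xstar‖ ^ 2 / 2 * (1 - Real.sqrt (μ * s) / 8) ^ k := by
  have hL0 : 0 < L := lt_of_lt_of_le hμ hμL
  set h : ℝ := Real.sqrt s with hhdef
  set sμ : ℝ := Real.sqrt μ with hsμdef
  set m : ℝ := Real.sqrt (μ * s) with hmdef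
  have hh : 0 < h := Real.sqrt_pos.mpr hs0
  have hsμ : 0 < sμ := Real.sqrt_pos.mpr hμ
  have hsμ2 : sμ ^ 2 = μ := Real.sq_sqrt hμ.le
  have hh2 : h ^ 2 = s := Real.sq_sqrt hs0.le
  have hm : m = sμ * h := by rw [hmdef, hsμdef, hhdef, Real.sqrt_mul hμ.le]
  have hLh : L * h ≤ sμ / 5 := by
    have h1 : (L * h)^2 ≤ (sμ/5)^2 := by
      have hA : L^2 * (μ / (25 * L^2)) = μ / 25 := by
        field_simp
      have hB : L^2 * s ≤ μ/25 := by
        calc L^2 * s ≤ L^2 * (μ / (25 * L^2)) := by nlinarith [sq_nonneg L, hs]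
          _ = μ / 25 := hA
      nlinarith [hh2, hsμ2]
    have h2 : 0 ≤ L * h := by positivity
    have h3 : 0 ≤ sμ / 5 := by positivity
    exact (pow_le_pow_iff_left₀ h2 h3 (by norm_num)).mp h1
  have hm15 : m ≤ 1 / 5 := by
    rw [hm]
    have h1 : L * (sμ * h) ≤ sμ ^ 2 / 5 := by nlinarith
    nlinarith
  have hfac0 : (0:ℝ) ≤ 1 - m / 8 := by
    have : 0 ≤ m := by rw [hm]; positivity
    linarith
  -- gradient at minimum is zero
  have gsq := gradsq_aux L hL0 f f' hgrad hLip xstar hmin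
  have gstar : f' xstar = 0 := by
    have h1 : ‖f' xstar‖^2 ≤ 0 := by
      have := gsq xstar
      simpa using this
    have : ‖f' xstar‖ = 0 := by nlinarith [norm_nonneg (f' xstar)]
    exact norm_eq_zero.mp this
  -- Lyapunov function
  set E : ℕ → ℝ := fun k => (f (x k) - f xstar) + (1/2) * ‖v k‖^2
      + sμ * ⟪v k, x k - xstar⟫ + μ * ‖x k - xstar‖^2 with hE
  -- E dominates the objective gap
  have EgeA : ∀ k, f (x k) - f xstar ≤ E k := by
    intro k
    have h1 : |⟪v k, x k - xstar⟫| ≤ ‖v k‖ * ‖x k - xstar‖ := abs_real_inner_le_norm _ _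
    have h2 := neg_abs_le (⟪v k, x k - xstar⟫ : ℝ)
    simp only [hE]
    nlinarith [sq_nonneg (sμ * ‖x k - xstar‖ - ‖v k‖), sq_nonneg sμ, norm_nonneg (x k - xstar)]
  -- initial bound
  have E0 : E 0 ≤ 3 * L * ‖x 0 - xstar‖ ^ 2 / 2 := by
    have h1 := descent_aux L f f' hgrad hLip xstar (x 0)
    rw [gstar] at h1
    simp only [inner_zero_left] at h1
    simp only [hE, hv0, norm_zero, inner_zero_left]
    nlinarith [norm_nonneg (x 0 - xstar)]
  -- one-step decrease
  have Edec : ∀ k, E (k + 1) ≤ (1 - m / 8) * E k := by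
    intro k
    set u : EuclideanSpace ℝ (Fin n) := x k - xstar with hu
    set g : EuclideanSpace ℝ (Fin n) := f' (x k) with hgk
    have hv1 : v (k + 1) = (1 - 2*m) • v k - h • g := by
      have h1 := hv k
      rw [sub_eq_iff_eq_add] at h1
      rw [h1, hgk]
      module
    have hu1 : x (k + 1) - xstar = u + h • v k := by
      have h1 := hx k
      rw [sub_eq_iff_eq_add] at h1
      rw [h1, hu]
      module
    -- expansions
    have eV : ‖v (k+1)‖^2 = (1 - 2*m)^2 * ‖v k‖^2 - 2*(1 - 2*m)*(h * ⟪g, v k⟫) + h^2 * ‖g‖^2 := by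
      rw [hv1, ← real_inner_self_eq_norm_sq, ← real_inner_self_eq_norm_sq,
        ← real_inner_self_eq_norm_sq]
      simp only [inner_sub_left, inner_sub_right, real_inner_smul_left, real_inner_smul_right]
      rw [real_inner_comm (v k) g]
      ring
    have eip : ⟪v (k+1), x (k+1) - xstar⟫
        = (1 - 2*m) * (⟪v k, u⟫ + h * ‖v k‖^2) - h * (⟪g, u⟫ + h * ⟪g, v k⟫) := by
      rw [hv1, hu1, ← real_inner_self_eq_norm_sq]
      simp only [inner_sub_left, inner_add_right, real_inner_smul_left, real_inner_smul_right]
      ring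
    have eU : ‖x (k+1) - xstar‖^2 = ‖u‖^2 + 2*h*⟪v k, u⟫ + h^2 * ‖v k‖^2 := by
      rw [hu1, ← real_inner_self_eq_norm_sq, ← real_inner_self_eq_norm_sq,
        ← real_inner_self_eq_norm_sq]
      simp only [inner_add_left, inner_add_right, real_inner_smul_left, real_inner_smul_right]
      rw [real_inner_comm u (v k)]
      ring
    -- scalar facts
    have ha1 : (f (x k) - f xstar) + μ/2 * ‖u‖^2 ≤ ⟪g, u⟫ := by
      have h1 := hsc (x k) xstar
      have e1 : xstar - x k = -u := by rw [hu]; abel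
      rw [e1] at h1
      simp only [inner_neg_right, norm_neg] at h1
      rw [← hgk] at h1
      linarith
    have ha2 : μ/2 * ‖u‖^2 ≤ f (x k) - f xstar := by
      have h1 := hsc xstar (x k)
      rw [gstar] at h1
      simp only [inner_zero_left] at h1
      have e1 : ‖x k - xstar‖ = ‖u‖ := by rw [hu]
      rw [e1] at h1
      linarith
    have ha3 : ‖g‖^2 ≤ 2 * L * (f (x k) - f xstar) := gsq (x k)
    have hgu : ‖g‖ ≤ L * ‖u‖ := by
      have h1 := hLip (x k) xstar
      rw [gstar, sub_zero, ← hgk, ← hu] at h1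
      exact h1
    have hr : ⟪v k, u⟫ ≤ ‖u‖ * ‖v k‖ := by
      rw [real_inner_comm]
      exact real_inner_le_norm _ _
    have hp : ⟪g, v k⟫ ≤ ‖g‖ * ‖v k‖ := real_inner_le_norm _ _
    have hstep : f (x (k+1)) - f xstar ≤ (f (x k) - f xstar) + h * ⟪g, v k⟫
        + L * h^2/2 * ‖v k‖^2 := by
      have h1 := descent_aux L f f' hgrad hLip (x k) (x (k+1))
      rw [hx k] at h1
      rw [real_inner_smul_right, norm_smul, Real.norm_eq_abs, abs_of_pos hh] at h1
      rw [← hgk] at h1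
      nlinarith [h1]
    have key := key_scalar μ L sμ h m (‖u‖^2) (‖v k‖^2) (‖g‖^2) (⟪g, u⟫) (⟪v k, u⟫) (⟪g, v k⟫)
      (f (x k) - f xstar) (f (x (k+1)) - f xstar) ‖u‖ ‖v k‖ ‖g‖
      hμ hμL hsμ hsμ2 hh hm hLh rfl rfl rfl (norm_nonneg _) (norm_nonneg _) (norm_nonneg _)
      ha1 ha2 ha3 hr hp hgu hstep
    simp only [hE]
    rw [eV, eip, eU]
    linarith [key]
  -- induction
  intro k
  have Ebound : ∀ k, E k ≤ 3 * L * ‖x 0 - xstar‖ ^ 2 / 2 * (1 - m / 8) ^ k := by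
    intro k
    induction k with
    | zero => simpa using E0
    | succ k ih =>
      calc E (k+1) ≤ (1 - m/8) * E k := Edec k
        _ ≤ (1 - m/8) * (3 * L * ‖x 0 - xstar‖ ^ 2 / 2 * (1 - m / 8) ^ k) :=
            mul_le_mul_of_nonneg_left ih hfac0
        _ = 3 * L * ‖x 0 - xstar‖ ^ 2 / 2 * (1 - m / 8) ^ (k+1) := by ring
  exact le_trans (EgeA k) (Ebound k)
end

section
/- Let 0 < μ ≤ L, let f be μ-strongly convex with L-Lipschitz gradient on ℝⁿ, with minimizer x⋆, and let 0 < s ≤ 1/L. Then the iterates of the implicit Euler scheme for the low-resolution strongly convex ODE satisfy, for every k ≥ 0, f(x_k) − f(x⋆) ≤ 3L‖x₀ − x⋆‖² / (2(1 + √(μs)/4)^k). -/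
set_option maxHeartbeats 1000000
open scoped RealInnerProductSpace

lemma expand3 {E : Type*} [NormedAddCommGroup E] [InnerProductSpace ℝ E]
    (c1 c2 c3 : ℝ) (y1 y2 y3 : E) :
    ‖c1 • y1 + c2 • y2 + c3 • y3‖ ^ 2 =
      c1^2*‖y1‖^2 + c2^2*‖y2‖^2 + c3^2*‖y3‖^2
      + 2*c1*c2*⟪y1,y2⟫ + 2*c1*c3*⟪y1,y3⟫ + 2*c2*c3*⟪y2,y3⟫ := by
  simp only [norm_add_sq_real, inner_add_left, real_inner_smul_left,
    real_inner_smul_right, norm_smul, Real.norm_eq_abs, mul_pow, sq_abs]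
  ring

lemma euler_step {E : Type*} [NormedAddCommGroup E] [InnerProductSpace ℝ E]
    (μ s : ℝ) (hμ : 0 < μ) (hs : 0 < s)
    (F0 F1 : ℝ) (g x0 x1 xstar v0 v1 : E)
    (hx : x1 - x0 = Real.sqrt s • v1)
    (hv : v1 - v0 = -((2 * Real.sqrt (μ * s)) • v1) - Real.sqrt s • g)
    (I1 : F0 ≥ F1 + ⟪g, x0 - x1⟫ + μ / 2 * ‖x0 - x1‖ ^ 2)
    (I2 : 0 ≥ F1 + ⟪g, xstar - x1⟫ + μ / 2 * ‖xstar - x1‖ ^ 2)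
    (hF1 : 0 ≤ F1) :
    (1 + Real.sqrt (μ * s) / 4) *
      (F1 + 1/4 * ‖v1‖ ^ 2 + 1/4 * ‖v1 + (2 * Real.sqrt μ) • (x1 - xstar)‖ ^ 2)
    ≤ F0 + 1/4 * ‖v0‖ ^ 2 + 1/4 * ‖v0 + (2 * Real.sqrt μ) • (x0 - xstar)‖ ^ 2 := by
  have hm0 : 0 ≤ Real.sqrt μ := Real.sqrt_nonneg _
  have hσ0 : 0 ≤ Real.sqrt s := Real.sqrt_nonneg _
  have hm2 : Real.sqrt μ ^ 2 = μ := Real.sq_sqrt hμ.le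
  have hσ2 : Real.sqrt s ^ 2 = s := Real.sq_sqrt hs.le
  have ham : Real.sqrt (μ * s) = Real.sqrt μ * Real.sqrt s := Real.sqrt_mul hμ.le s
  rw [ham] at hv ⊢
  set m := Real.sqrt μ
  set σ := Real.sqrt s
  set u := v1 with hu
  set p := x1 - xstar with hp
  -- vector identities
  have hx01 : x0 - x1 = (-σ) • u := by
    rw [neg_smul, ← hx]; abel
  have hxs1 : xstar - x1 = -p := by rw [hp]; abel
  have hv0' : v0 = (1 + 2 * (m * σ)) • u + σ • g + (0:ℝ) • p := by
    have h2 : v0 = u - (u - v0) := by abel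
    rw [h2, hv]; module
  have hw0 : v0 + (2 * m) • (x0 - xstar) = (1:ℝ) • u + σ • g + (2*m) • p := by
    have hq : x0 - xstar = p - σ • u := by
      have : x0 - xstar = (x1 - xstar) - (x1 - x0) := by abel
      rw [this, hx, hp]
    rw [hv0', hq]; module
  have hw1 : u + (2 * m) • p = (1:ℝ) • u + (0:ℝ) • g + (2*m) • p := by module
  -- scalar expansions
  have e0 : ‖v0‖^2 = (1 + 2*(m*σ))^2*‖u‖^2 + σ^2*‖g‖^2
      + 2*(1+2*(m*σ))*σ*⟪u,g⟫ := by
    rw [hv0', expand3]; ring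
  have e1 : ‖v0 + (2*m) • (x0 - xstar)‖^2
      = ‖u‖^2 + σ^2*‖g‖^2 + 4*m^2*‖p‖^2 + 2*σ*⟪u,g⟫ + 4*m*⟪u,p⟫ + 4*(m*σ)*⟪g,p⟫ := by
    rw [hw0, expand3]; ring
  have e2 : ‖u + (2*m) • p‖^2 = ‖u‖^2 + 4*m*⟪u,p⟫ + 4*m^2*‖p‖^2 := by
    rw [hw1, expand3]; ring
  have e3 : ⟪g, x0 - x1⟫ = -(σ*⟪u,g⟫) := by
    rw [hx01, real_inner_smul_right, real_inner_comm]; ring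
  have e4 : ‖x0 - x1‖^2 = σ^2*‖u‖^2 := by
    rw [hx01, norm_smul, Real.norm_eq_abs, mul_pow, sq_abs]; ring
  have e5 : ⟪g, xstar - x1⟫ = -⟪g,p⟫ := by
    rw [hxs1, inner_neg_right]
  have e6 : ‖xstar - x1‖^2 = ‖p‖^2 := by rw [hxs1, norm_neg]
  rw [e3, e4] at I1
  rw [e5, e6] at I2
  rw [e0, e1, e2]
  -- nonnegativity certificates
  have hmσ : 0 ≤ m * σ := mul_nonneg hm0 hσ0
  have c1 : 0 ≤ σ^2*‖g‖^2 + 2*m*σ^2*⟪u,g⟫ + m^2*σ^2*‖u‖^2 := by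
    have h := sq_nonneg ‖σ • g + (m*σ) • u + (0:ℝ) • p‖
    rw [expand3, real_inner_comm u g] at h
    ring_nf at h ⊢
    linarith
  have c2 : 0 ≤ m*σ*(‖u‖^2 - 4*m*⟪u,p⟫ + 4*m^2*‖p‖^2) := by
    apply mul_nonneg hmσ
    have h := sq_nonneg ‖(1:ℝ) • u + (0:ℝ) • g + (-(2*m)) • p‖
    rw [expand3] at h
    ring_nf at h ⊢
    linarith
  have hI2' : 0 ≤ m*σ*(⟪g,p⟫ - F1 - m^2/2*‖p‖^2) := by
    apply mul_nonneg hmσ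
    have : μ = m^2 := hm2.symm
    rw [this] at I2; linarith
  have hmsA : 0 ≤ m*σ*‖u‖^2 := mul_nonneg hmσ (sq_nonneg _)
  have hmsF1 : 0 ≤ m*σ*F1 := mul_nonneg hmσ hF1
  have hm2s2A : 0 ≤ m^2*σ^2*‖u‖^2 := by positivity
  have hμm : μ = m^2 := hm2.symm
  rw [hμm] at I1
  linarith [I1, c1, c2, hI2', hmsA, hmsF1, hm2s2A]

theorem stmt17
    {n : ℕ} (μ L : ℝ) (hμ : 0 < μ) (hμL : μ ≤ L)
    (f : EuclideanSpace ℝ (Fin n) → ℝ)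
    (f' : EuclideanSpace ℝ (Fin n) → EuclideanSpace ℝ (Fin n))
    (hgrad : ∀ z, HasGradientAt f (f' z) z)
    (hLip : ∀ z w, ‖f' z - f' w‖ ≤ L * ‖z - w‖)
    (hsc : ∀ z w, f w ≥ f z + ⟪f' z, w - z⟫ + μ / 2 * ‖w - z‖ ^ 2)
    (xstar : EuclideanSpace ℝ (Fin n)) (hmin : ∀ z, f xstar ≤ f z)
    (s : ℝ) (hs0 : 0 < s) (hs : s ≤ 1 / L)
    (x v : ℕ → EuclideanSpace ℝ (Fin n))
    (hv0 : v 0 = 0)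
    (hx : ∀ k : ℕ, x (k + 1) - x k = Real.sqrt s • v (k + 1))
    (hv : ∀ k : ℕ, v (k + 1) - v k = -((2 * Real.sqrt (μ * s)) • v (k + 1))
      - Real.sqrt s • f' (x (k + 1)))
    : ∀ k : ℕ, f (x k) - f xstar ≤ 3 * L * ‖x 0 - xstar‖ ^ 2 / (2 * (1 + Real.sqrt (μ * s) / 4) ^ k) := by
  have hL : 0 < L := lt_of_lt_of_le hμ hμL
  -- gradient vanishes at the minimizer
  have hgstar : f' xstar = 0 := by
    by_contra hne
    set g := f' xstar with hg
    have hgpos : 0 < ‖g‖ := norm_pos_iff.mpr hne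
    set w := xstar - (1/(2*L)) • g with hw
    have hws : xstar - w = (1/(2*L)) • g := by rw [hw]; abel
    have h1 := hsc w xstar
    have h2 := hmin w
    have hq : 0 ≤ μ / 2 * ‖xstar - w‖ ^ 2 := by positivity
    have h3 : ⟪f' w, xstar - w⟫ ≤ 0 := by linarith
    have h4 : ⟪f' w, xstar - w⟫ = (1/(2*L)) * ⟪f' w, g⟫ := by
      rw [hws, real_inner_smul_right]
    have hLne : (0:ℝ) < 1/(2*L) := by positivity
    have h9 : ⟪f' w, g⟫ ≤ 0 := by
      by_contra hc
      push_neg at hc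
      nlinarith [mul_pos hLne hc]
    have h5 : ⟪f' w, g⟫ = ‖g‖^2 + ⟪f' w - g, g⟫ := by
      rw [inner_sub_left, real_inner_self_eq_norm_sq]; ring
    have h8 : ‖w - xstar‖ = 1/(2*L) * ‖g‖ := by
      rw [norm_sub_rev, hws, norm_smul, Real.norm_eq_abs, abs_of_nonneg hLne.le]
    have h7' : ‖f' w - g‖ ≤ ‖g‖/2 := by
      have h7 := hLip w xstar
      rw [h8] at h7
      have : L * (1/(2*L) * ‖g‖) = ‖g‖/2 := by field_simp
      linarith
    have habs := abs_real_inner_le_norm (f' w - g) g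
    have hmm := mul_le_mul_of_nonneg_right h7' (norm_nonneg g)
    nlinarith [habs, hmm, h5, h9, hgpos, neg_abs_le (⟪f' w - g, g⟫ : ℝ)]
  -- Lyapunov function
  set m := Real.sqrt μ with hm
  set a := Real.sqrt (μ * s) with ha
  have ha0 : 0 ≤ a := Real.sqrt_nonneg _
  have hm2 : m ^ 2 = μ := Real.sq_sqrt hμ.le
  set r := 1 + a / 4 with hr
  have hr1 : (1:ℝ) ≤ r := by rw [hr]; linarith
  set Ly : ℕ → ℝ := fun k =>
    f (x k) - f xstar + 1/4 * ‖v k‖ ^ 2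
      + 1/4 * ‖v k + (2*m) • (x k - xstar)‖ ^ 2 with hLy
  have hstep : ∀ k : ℕ, r * Ly (k+1) ≤ Ly k := by
    intro k
    have I1 : f (x k) - f xstar ≥ (f (x (k+1)) - f xstar)
        + ⟪f' (x (k+1)), x k - x (k+1)⟫ + μ/2 * ‖x k - x (k+1)‖ ^ 2 := by
      have := hsc (x (k+1)) (x k); linarith
    have I2 : (0:ℝ) ≥ (f (x (k+1)) - f xstar)
        + ⟪f' (x (k+1)), xstar - x (k+1)⟫ + μ/2 * ‖xstar - x (k+1)‖ ^ 2 := by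
      have := hsc (x (k+1)) xstar; linarith
    have hF1 : 0 ≤ f (x (k+1)) - f xstar := sub_nonneg.mpr (hmin _)
    exact euler_step μ s hμ hs0 (f (x k) - f xstar) (f (x (k+1)) - f xstar)
      (f' (x (k+1))) (x k) (x (k+1)) xstar (v k) (v (k+1)) (hx k) (hv k) I1 I2 hF1
  have hrpos : (0:ℝ) < r := by linarith
  have hmain : ∀ k : ℕ, Ly k * r ^ k ≤ Ly 0 := by
    intro k
    induction k with
    | zero => simp
    | succ k ih =>
      have hrk : (0:ℝ) ≤ r ^ k := (pow_pos hrpos k).le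
      have h1 := mul_le_mul_of_nonneg_right (hstep k) hrk
      calc Ly (k+1) * r ^ (k+1) = r * Ly (k+1) * r ^ k := by ring
        _ ≤ Ly k * r ^ k := h1
        _ ≤ Ly 0 := ih
  -- bound on Ly 0
  have hE0 : Ly 0 ≤ 3 * L / 2 * ‖x 0 - xstar‖ ^ 2 := by
    have hI := hsc (x 0) xstar
    have hgn : ‖f' (x 0)‖ ≤ L * ‖x 0 - xstar‖ := by
      have := hLip (x 0) xstar
      rwa [hgstar, sub_zero] at this
    have hcs : |⟪f' (x 0), xstar - x 0⟫| ≤ ‖f' (x 0)‖ * ‖xstar - x 0‖ :=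
      abs_real_inner_le_norm _ _
    have hrev : ‖xstar - x 0‖ = ‖x 0 - xstar‖ := norm_sub_rev _ _
    rw [hrev] at hI hcs
    have hf0 : f (x 0) - f xstar ≤ L * ‖x 0 - xstar‖ ^ 2 - μ/2 * ‖x 0 - xstar‖ ^ 2 := by
      have h1 : -(‖f' (x 0)‖ * ‖x 0 - xstar‖) ≤ ⟪f' (x 0), xstar - x 0⟫ := by
        have := neg_abs_le (⟪f' (x 0), xstar - x 0⟫ : ℝ); linarith
      nlinarith [mul_le_mul_of_nonneg_right hgn (norm_nonneg (x 0 - xstar))]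
    have hLy0 : Ly 0 = f (x 0) - f xstar + μ * ‖x 0 - xstar‖ ^ 2 := by
      rw [hLy]
      simp only [hv0, norm_zero, zero_add]
      rw [norm_smul, Real.norm_eq_abs, abs_of_nonneg (by positivity : (0:ℝ) ≤ 2*m),
        mul_pow]
      nlinarith [hm2]
    rw [hLy0]
    nlinarith [sq_nonneg ‖x 0 - xstar‖]
  -- conclusion
  intro k
  have hrk : (0:ℝ) < r ^ k := pow_pos hrpos k
  rw [le_div_iff₀ (by positivity : (0:ℝ) < 2 * r ^ k)]
  have hLleq : f (x k) - f xstar ≤ Ly k := by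
    rw [hLy]
    nlinarith [sq_nonneg ‖v k‖, sq_nonneg ‖v k + (2*m) • (x k - xstar)‖]
  have h1 := mul_le_mul_of_nonneg_right hLleq hrk.le
  have h2 := hmain k
  have h3 : (f (x k) - f xstar) * r ^ k ≤ 3*L/2*‖x 0 - xstar‖^2 :=
    le_trans h1 (le_trans h2 hE0)
  nlinarith [h3]
end

section
/- Let f be convex with L-Lipschitz gradient on ℝⁿ, with minimizer x⋆, and let 0 < s ≤ 1/L. Then the gradient descent iterates x_{k+1} = x_k − s∇f(x_k), started from any x₀, satisfy for every k ≥ 1: f(x_k) − f(x⋆) ≤ ‖x₀ − x⋆‖² / (2ks), and for every k ≥ 0: min_{0 ≤ i ≤ k} ‖∇f(x_i)‖² ≤ 2‖x₀ − x⋆‖² / (s²(k+1)(k+2)). -/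
open scoped RealInnerProductSpace

variable {E : Type*} [NormedAddCommGroup E] [InnerProductSpace ℝ E] [CompleteSpace E]

lemma lineDeriv' {f : E → ℝ} {f' : E → E} (hgrad : ∀ z, HasGradientAt f (f' z) z)
    (x y : E) (t : ℝ) :
    HasDerivAt (fun t : ℝ => f (x + t • (y - x))) ⟪f' (x + t • (y - x)), y - x⟫ t := by
  have h1 : HasDerivAt (fun t : ℝ => x + t • (y - x)) (y - x) t := by
    simpa using ((hasDerivAt_id t).smul_const (y - x)).const_add x
  have h2 := (hgrad (x + t • (y - x))).hasFDerivAt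
  simpa [InnerProductSpace.toDual_apply_apply, Function.comp_def] using h2.comp_hasDerivAt t h1

lemma grad_ineq {f : E → ℝ} {f' : E → E} (hgrad : ∀ z, HasGradientAt f (f' z) z)
    (hconv : ConvexOn ℝ Set.univ f) (x y : E) :
    f x + ⟪f' x, y - x⟫ ≤ f y := by
  have hc : ConvexOn ℝ Set.univ (fun t : ℝ => f (x + t • (y - x))) := by
    have := hconv.comp_affineMap (AffineMap.lineMap x y)
    convert this.subset (Set.subset_univ _) convex_univ using 2 with t
    rotate_left 4
    simp [AffineMap.lineMap_apply]
    abel_nf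
    all_goals rfl
  have hd := lineDeriv' hgrad x y 0
  have := hc.le_slope_of_hasDerivAt (Set.mem_univ (0:ℝ)) (Set.mem_univ 1) one_pos (by simpa using hd)
  simp [slope_def_field] at this
  simpa [add_comm] using add_le_add_left this (f x) |>.trans_eq (by simp)

lemma slope01 {g : ℝ → ℝ} {d : ℝ} (hc : ConvexOn ℝ Set.univ g) (hd : HasDerivAt g d 0) :
    g 0 + d ≤ g 1 := by
  have := hc.le_slope_of_hasDerivAt (Set.mem_univ (0:ℝ)) (Set.mem_univ 1) one_pos hd
  simp [slope_def_field] at this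
  linarith

lemma descent {L : ℝ} (hL : 0 < L) {f : E → ℝ} {f' : E → E}
    (hgrad : ∀ z, HasGradientAt f (f' z) z)
    (hLip : ∀ z w, ‖f' z - f' w‖ ≤ L * ‖z - w‖) (x y : E) :
    f y ≤ f x + ⟪f' x, y - x⟫ + L / 2 * ‖y - x‖ ^ 2 := by
  set c : ℝ → E := fun t => x + t • (y - x) with hc
  have hcd : ∀ t : ℝ, HasDerivAt c (y - x) t := fun t => by
    simpa [hc] using ((hasDerivAt_id t).smul_const (y - x)).const_add x
  set h : ℝ → ℝ := fun t => L / 2 * ⟪c t, c t⟫ - f (c t) with hh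
  set φ : ℝ → ℝ := fun t => L * ⟪c t, y - x⟫ - ⟪f' (c t), y - x⟫ with hφ
  have hder : ∀ t : ℝ, HasDerivAt h (φ t) t := by
    intro t
    have h1 : HasDerivAt (fun t => (⟪c t, c t⟫ : ℝ)) (⟪c t, y - x⟫ + ⟪y - x, c t⟫) t :=
      (hcd t).inner ℝ (hcd t)
    have h2 := (h1.const_mul (L / 2)).sub (lineDeriv' hgrad x y t)
    convert h2 using 1
    rotate_left 3
    simp only [hφ, real_inner_comm (y - x) (c t)]
    ring
    all_goals rfl
  have hmono : Monotone φ := by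
    intro t u htu
    have hsub : c u - c t = (u - t) • (y - x) := by
      simp [hc, sub_smul]
    have h1 : ⟪f' (c u) - f' (c t), y - x⟫ ≤ L * (u - t) * ‖y - x‖ ^ 2 := by
      calc ⟪f' (c u) - f' (c t), y - x⟫ ≤ ‖f' (c u) - f' (c t)‖ * ‖y - x‖ :=
            real_inner_le_norm _ _
        _ ≤ L * ‖c u - c t‖ * ‖y - x‖ := by
            have := hLip (c u) (c t)
            have h0 : (0:ℝ) ≤ ‖y - x‖ := norm_nonneg _
            nlinarith
        _ = L * (u - t) * ‖y - x‖ ^ 2 := by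
            rw [hsub, norm_smul]
            simp [abs_of_nonneg (sub_nonneg.2 htu)]
            ring
    have h2 : L * ⟪c u - c t, y - x⟫ = L * (u - t) * ‖y - x‖ ^ 2 := by
      rw [hsub, real_inner_smul_left, real_inner_self_eq_norm_sq]
      ring
    have h3 : ⟪c u, y - x⟫ - ⟪c t, y - x⟫ = ⟪c u - c t, y - x⟫ := by
      rw [inner_sub_left]
    have h4 : ⟪f' (c u), y - x⟫ - ⟪f' (c t), y - x⟫ = ⟪f' (c u) - f' (c t), y - x⟫ := by
      rw [inner_sub_left]
    simp only [hφ]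
    nlinarith
  have hdiff : Differentiable ℝ h := fun t => (hder t).differentiableAt
  have hderiv : deriv h = φ := funext fun t => (hder t).deriv
  have hcv : ConvexOn ℝ Set.univ h := Monotone.convexOn_univ_of_deriv hdiff (hderiv ▸ hmono)
  have := slope01 hcv (hder 0)
  have hc0 : c 0 = x := by simp [hc]
  have hc1 : c 1 = y := by simp [hc]
  rw [hh] at this
  simp only [hc0, hc1, hφ] at this
  have hexp : ⟪y - x, y - x⟫ = ⟪y, y⟫ - 2 * ⟪x, y⟫ + ⟪x, x⟫ := by
    simp only [inner_sub_left, inner_sub_right, real_inner_comm x y]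
    ring
  have hnorm : ‖y - x‖ ^ 2 = ⟪y - x, y - x⟫ := (real_inner_self_eq_norm_sq _).symm
  have hxy : ⟪x, y - x⟫ = ⟪x, y⟫ - ⟪x, x⟫ := by rw [inner_sub_right]
  rw [hxy] at this
  rw [hnorm, hexp]
  ring_nf at this ⊢
  linarith

lemma interp {L : ℝ} (hL : 0 < L) {f : E → ℝ} {f' : E → E}
    (hgrad : ∀ z, HasGradientAt f (f' z) z) (hconv : ConvexOn ℝ Set.univ f)
    (hLip : ∀ z w, ‖f' z - f' w‖ ≤ L * ‖z - w‖) (u v : E) :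
    f u + ⟪f' u, v - u⟫ + 1 / (2 * L) * ‖f' u - f' v‖ ^ 2 ≤ f v := by
  have hL0 : L ≠ 0 := ne_of_gt hL
  set Δ := f' u - f' v with hΔdef
  set w := v + L⁻¹ • Δ with hw
  have h1 := descent hL hgrad hLip v w
  have h2 := grad_ineq hgrad hconv u w
  have hwv : w - v = L⁻¹ • Δ := by simp [hw]
  have hwu : w - u = (v - u) + L⁻¹ • Δ := by rw [hw]; abel
  have hn : L / 2 * ‖w - v‖ ^ 2 = 1 / (2 * L) * ‖Δ‖ ^ 2 := by
    rw [hwv, norm_smul, mul_pow]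
    rw [Real.norm_eq_abs, abs_of_pos (inv_pos.2 hL)]
    field_simp
  have hi1 : ⟪f' v, w - v⟫ = L⁻¹ * ⟪f' v, Δ⟫ := by rw [hwv, real_inner_smul_right]
  have hi2 : ⟪f' u, w - u⟫ = ⟪f' u, v - u⟫ + L⁻¹ * ⟪f' u, Δ⟫ := by
    rw [hwu, inner_add_right, real_inner_smul_right]
  have hΔ : L⁻¹ * ⟪f' u, Δ⟫ - L⁻¹ * ⟪f' v, Δ⟫ = L⁻¹ * ‖Δ‖ ^ 2 := by
    rw [← mul_sub, ← inner_sub_left, ← hΔdef, real_inner_self_eq_norm_sq]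
  have hhalf : L⁻¹ * ‖Δ‖ ^ 2 = 1 / (2 * L) * ‖Δ‖ ^ 2 + 1 / (2 * L) * ‖Δ‖ ^ 2 := by
    field_simp
    ring
  rw [hn, hi1] at h1
  rw [hi2] at h2
  linarith

lemma cocoercive {L : ℝ} (hL : 0 < L) {f : E → ℝ} {f' : E → E}
    (hgrad : ∀ z, HasGradientAt f (f' z) z) (hconv : ConvexOn ℝ Set.univ f)
    (hLip : ∀ z w, ‖f' z - f' w‖ ≤ L * ‖z - w‖) (u v : E) :
    1 / L * ‖f' u - f' v‖ ^ 2 ≤ ⟪f' u - f' v, u - v⟫ := by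
  have h1 := interp hL hgrad hconv hLip u v
  have h2 := interp hL hgrad hconv hLip v u
  have e1 : ⟪f' u, v - u⟫ + ⟪f' v, u - v⟫ = -⟪f' u - f' v, u - v⟫ := by
    rw [inner_sub_left]
    have : ⟪f' u, v - u⟫ = -⟪f' u, u - v⟫ := by
      rw [← inner_neg_right]; congr 1; abel
    rw [this]; ring
  have e2 : ‖f' v - f' u‖ = ‖f' u - f' v‖ := by rw [norm_sub_rev]
  rw [e2] at h2
  have hhalf : 1 / L * ‖f' u - f' v‖ ^ 2 =
      1 / (2 * L) * ‖f' u - f' v‖ ^ 2 + 1 / (2 * L) * ‖f' u - f' v‖ ^ 2 := by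
    field_simp; ring
  linarith


open scoped RealInnerProductSpace


lemma seq_sum1 (r D : ℕ → ℝ) (s : ℝ) (h : ∀ i, r (i + 1) ≤ r i - 2 * s * D i) :
    ∀ k, r k + 2 * s * ∑ i ∈ Finset.range k, D i ≤ r 0 := by
  intro k
  induction k with
  | zero => simp
  | succ k ih =>
    rw [Finset.sum_range_succ]
    have := h k
    linarith

lemma seq_sum2 (D g : ℕ → ℝ) (s : ℝ) (hs : 0 ≤ s)
    (h : ∀ i, D (i + 1) ≤ D i - s / 2 * g i) :
    ∀ k : ℕ, s / 2 * ∑ i ∈ Finset.range k, ((i : ℝ) + 1) * g i ≤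
      (∑ i ∈ Finset.range k, D i) - (k : ℝ) * D k := by
  intro k
  induction k with
  | zero => simp
  | succ k ih =>
    rw [Finset.sum_range_succ, Finset.sum_range_succ]
    have h1 := h k
    have hk : (0:ℝ) ≤ (k : ℝ) + 1 := by positivity
    have hthis : ((k : ℝ) + 1) * (s / 2 * g k) ≤ ((k : ℝ) + 1) * (D k - D (k + 1)) := by
      nlinarith
    push_cast
    nlinarith

lemma seq_gauss : ∀ k : ℕ, ∑ i ∈ Finset.range (k + 1), ((i : ℝ) + 1)
    = ((k:ℝ) + 1) * ((k:ℝ) + 2) / 2 := by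
  intro k
  induction k with
  | zero => norm_num
  | succ k ih =>
    rw [Finset.sum_range_succ, ih]
    push_cast
    ring

lemma part1_arith (D : ℕ → ℝ) (R s : ℝ) (hs0 : 0 < s)
    (hanti : ∀ i j : ℕ, i ≤ j → D j ≤ D i)
    (hsum : ∀ k : ℕ, ∑ i ∈ Finset.range k, D i ≤ R / (2 * s)) :
    ∀ k : ℕ, 1 ≤ k → D k ≤ R / (2 * k * s) := by
  intro k hk
  have hsumlb : (k : ℝ) * D k ≤ ∑ i ∈ Finset.range k, D i := by
    have := Finset.card_nsmul_le_sum (Finset.range k) D (D k)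
      (fun i hi => hanti i k (le_of_lt (Finset.mem_range.mp hi)))
    simpa [nsmul_eq_mul, mul_comm] using this
  have hkpos : (0:ℝ) < (k : ℝ) := by exact_mod_cast hk
  rw [le_div_iff₀ (by positivity)]
  have h3 := le_trans hsumlb (hsum k)
  rw [le_div_iff₀ (by positivity)] at h3
  nlinarith

lemma part2_arith (D g : ℕ → ℝ) (R s : ℝ) (hs0 : 0 < s)
    (hDnn : ∀ i, 0 ≤ D i) (hgnn : ∀ i, 0 ≤ g i)
    (hganti : ∀ i j : ℕ, i ≤ j → g j ≤ g i)
    (hS2 : ∀ k : ℕ, s / 2 * ∑ i ∈ Finset.range k, ((i : ℝ) + 1) * g i ≤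
      (∑ i ∈ Finset.range k, D i) - (k : ℝ) * D k)
    (hsum : ∀ k : ℕ, ∑ i ∈ Finset.range k, D i ≤ R / (2 * s)) :
    ∀ k : ℕ, g k ≤ 2 * R / (s ^ 2 * ((k:ℝ) + 1) * ((k:ℝ) + 2)) := by
  intro k
  have hlow : g k * (((k:ℝ) + 1) * ((k:ℝ) + 2) / 2) ≤
      ∑ i ∈ Finset.range (k + 1), ((i : ℝ) + 1) * g i := by
    rw [← seq_gauss k, Finset.mul_sum]
    apply Finset.sum_le_sum
    intro i hi
    have hik : i ≤ k := Nat.lt_succ_iff.mp (Finset.mem_range.mp hi)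
    have h1 := hganti i k hik
    have h2 : (0:ℝ) ≤ (i:ℝ) + 1 := by positivity
    nlinarith
  have h2 := hS2 (k + 1)
  push_cast at h2
  have hkD : 0 ≤ ((k:ℝ) + 1) * D (k + 1) := by
    have := hDnn (k + 1); positivity
  have hchain : s / 2 * (g k * (((k:ℝ) + 1) * ((k:ℝ) + 2) / 2)) ≤ R / (2 * s) := by
    have hmul := mul_le_mul_of_nonneg_left hlow (by positivity : (0:ℝ) ≤ s / 2)
    calc s / 2 * (g k * (((k:ℝ) + 1) * ((k:ℝ) + 2) / 2))
        ≤ s / 2 * ∑ i ∈ Finset.range (k + 1), ((i : ℝ) + 1) * g i := hmul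
      _ ≤ (∑ i ∈ Finset.range (k + 1), D i) - ((k:ℝ) + 1) * D (k + 1) := h2
      _ ≤ ∑ i ∈ Finset.range (k + 1), D i := by linarith
      _ ≤ R / (2 * s) := hsum (k + 1)
  rw [le_div_iff₀ (by positivity)] at hchain
  rw [le_div_iff₀ (by positivity)]
  nlinarith


theorem stmt18
    {n : ℕ} (L : ℝ) (hL : 0 < L)
    (f : EuclideanSpace ℝ (Fin n) → ℝ)
    (f' : EuclideanSpace ℝ (Fin n) → EuclideanSpace ℝ (Fin n))
    (hgrad : ∀ z, HasGradientAt f (f' z) z)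
    (hconv : ConvexOn ℝ Set.univ f)
    (hLip : ∀ z w, ‖f' z - f' w‖ ≤ L * ‖z - w‖)
    (xstar : EuclideanSpace ℝ (Fin n)) (hmin : ∀ z, f xstar ≤ f z)
    (s : ℝ) (hs0 : 0 < s) (hs : s ≤ 1 / L)
    (x : ℕ → EuclideanSpace ℝ (Fin n))
    (hx : ∀ k : ℕ, x (k + 1) = x k - s • f' (x k))
    : (∀ k : ℕ, 1 ≤ k → f (x k) - f xstar ≤ ‖x 0 - xstar‖ ^ 2 / (2 * k * s)) ∧
      (∀ k : ℕ, ∃ i ≤ k, ‖f' (x i)‖ ^ 2 ≤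
        2 * ‖x 0 - xstar‖ ^ 2 / (s ^ 2 * ((k : ℝ) + 1) * ((k : ℝ) + 2))) := by
  have hsL : s * L ≤ 1 := by
    rw [div_eq_mul_inv, one_mul] at hs
    calc s * L ≤ L⁻¹ * L := by nlinarith
      _ = 1 := inv_mul_cancel₀ (ne_of_gt hL)
  -- gradient vanishes at the minimizer
  have hZ : f' xstar = 0 := by
    have h := descent hL hgrad hLip xstar (xstar - L⁻¹ • f' xstar)
    have e1 : xstar - L⁻¹ • f' xstar - xstar = -(L⁻¹ • f' xstar) := by abel
    rw [e1] at h
    have e2 : ⟪f' xstar, -(L⁻¹ • f' xstar)⟫ = -(L⁻¹ * ‖f' xstar‖ ^ 2) := by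
      rw [inner_neg_right, real_inner_smul_right, real_inner_self_eq_norm_sq]
    have e3 : ‖-(L⁻¹ • f' xstar)‖ ^ 2 = L⁻¹ ^ 2 * ‖f' xstar‖ ^ 2 := by
      rw [norm_neg, norm_smul, mul_pow, Real.norm_eq_abs, abs_of_pos (inv_pos.2 hL)]
    rw [e2, e3] at h
    have h2 := hmin (xstar - L⁻¹ • f' xstar)
    have hg0 : ‖f' xstar‖ ^ 2 ≤ 0 := by
      have hLinv : L * L⁻¹ ^ 2 = L⁻¹ := by field_simp
      nlinarith [inv_pos.2 hL]
    have : ‖f' xstar‖ = 0 := by nlinarith [norm_nonneg (f' xstar), sq_nonneg ‖f' xstar‖]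
    exact norm_eq_zero.mp this
  -- key per-point inequality (B)
  have hB : ∀ z, (f z - f xstar) + 1 / (2 * L) * ‖f' z‖ ^ 2 ≤ ⟪f' z, z - xstar⟫ := by
    intro z
    have h := interp hL hgrad hconv hLip z xstar
    rw [hZ, sub_zero] at h
    have e : ⟪f' z, xstar - z⟫ = -⟪f' z, z - xstar⟫ := by
      rw [← inner_neg_right]; congr 1; abel
    rw [e] at h; linarith
  have hgnn : ∀ i : ℕ, (0:ℝ) ≤ ‖f' (x i)‖ ^ 2 := fun i => sq_nonneg _
  have hDnn : ∀ i : ℕ, (0:ℝ) ≤ f (x i) - f xstar := fun i => sub_nonneg.2 (hmin (x i))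
  have hstep : ∀ i, x (i + 1) - x i = -(s • f' (x i)) := fun i => by rw [hx i]; abel
  -- P1 : sufficient decrease
  have P1 : ∀ i, f (x (i + 1)) - f xstar ≤ (f (x i) - f xstar) - s / 2 * ‖f' (x i)‖ ^ 2 := by
    intro i
    have h := descent hL hgrad hLip (x i) (x (i + 1))
    rw [hstep i] at h
    have e2 : ⟪f' (x i), -(s • f' (x i))⟫ = -(s * ‖f' (x i)‖ ^ 2) := by
      rw [inner_neg_right, real_inner_smul_right, real_inner_self_eq_norm_sq]
    have e3 : ‖-(s • f' (x i))‖ ^ 2 = s ^ 2 * ‖f' (x i)‖ ^ 2 := by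
      rw [norm_neg, norm_smul, mul_pow, Real.norm_eq_abs, abs_of_pos hs0]
    rw [e2, e3] at h
    have : L / 2 * (s ^ 2 * ‖f' (x i)‖ ^ 2) ≤ s / 2 * ‖f' (x i)‖ ^ 2 := by
      nlinarith [hgnn i]
    linarith
  -- P2 : distance decrease
  have P2 : ∀ i, ‖x (i + 1) - xstar‖ ^ 2 ≤ ‖x i - xstar‖ ^ 2
      - 2 * s * (f (x i) - f xstar) := by
    intro i
    have e : x (i + 1) - xstar = (x i - xstar) - s • f' (x i) := by rw [hx i]; abel
    have hn : ‖x (i + 1) - xstar‖ ^ 2 = ‖x i - xstar‖ ^ 2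
        - 2 * (s * ⟪f' (x i), x i - xstar⟫) + s ^ 2 * ‖f' (x i)‖ ^ 2 := by
      rw [e, norm_sub_sq_real, real_inner_smul_right, norm_smul, mul_pow,
        Real.norm_eq_abs, abs_of_pos hs0, real_inner_comm]
    have hb := hB (x i)
    have hb2 : 2 * s * ((f (x i) - f xstar) + 1 / (2 * L) * ‖f' (x i)‖ ^ 2)
        ≤ 2 * s * ⟪f' (x i), x i - xstar⟫ :=
      mul_le_mul_of_nonneg_left hb (by positivity)
    have hss : s ^ 2 * ‖f' (x i)‖ ^ 2 ≤ 2 * s * (1 / (2 * L) * ‖f' (x i)‖ ^ 2) := by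
      have h1 : 2 * s * (1 / (2 * L) * ‖f' (x i)‖ ^ 2) = s * (1 / L) * ‖f' (x i)‖ ^ 2 := by
        field_simp
      rw [h1]
      nlinarith [mul_nonneg (mul_nonneg (sub_nonneg.2 hs) hs0.le) (hgnn i)]
    linarith
  -- P3 : gradient norm decrease
  have P3 : ∀ i, ‖f' (x (i + 1))‖ ^ 2 ≤ ‖f' (x i)‖ ^ 2 := by
    intro i
    have h := cocoercive hL hgrad hconv hLip (x (i + 1)) (x i)
    rw [hstep i] at h
    have e1 : ⟪f' (x (i + 1)) - f' (x i), -(s • f' (x i))⟫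
        = -(s * ⟪f' (x (i + 1)) - f' (x i), f' (x i)⟫) := by
      rw [inner_neg_right, real_inner_smul_right]
    rw [e1] at h
    have e3 : ‖f' (x (i + 1))‖ ^ 2 = ‖f' (x i)‖ ^ 2
        + 2 * ⟪f' (x i), f' (x (i + 1)) - f' (x i)⟫ + ‖f' (x (i + 1)) - f' (x i)‖ ^ 2 := by
      have e2 : f' (x (i + 1)) = f' (x i) + (f' (x (i + 1)) - f' (x i)) := by abel
      calc ‖f' (x (i + 1))‖ ^ 2
          = ‖f' (x i) + (f' (x (i + 1)) - f' (x i))‖ ^ 2 := by rw [← e2]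
        _ = _ := norm_add_sq_real _ _
    have hsym : ⟪f' (x (i + 1)) - f' (x i), f' (x i)⟫
        = ⟪f' (x i), f' (x (i + 1)) - f' (x i)⟫ := real_inner_comm _ _
    rw [hsym] at h
    have hΔnn : (0:ℝ) ≤ ‖f' (x (i + 1)) - f' (x i)‖ ^ 2 := sq_nonneg _
    -- from h : 1/L * nΔ ≤ -(s * ip), and s*L ≤ 1 : s*(2*ip + nΔ) ≤ 0
    have hkey : 2 * ⟪f' (x i), f' (x (i + 1)) - f' (x i)⟫
        + ‖f' (x (i + 1)) - f' (x i)‖ ^ 2 ≤ 0 := by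
      have h2 : s * ‖f' (x (i + 1)) - f' (x i)‖ ^ 2 ≤ 1 / L * ‖f' (x (i + 1)) - f' (x i)‖ ^ 2 := by
        have : s ≤ 1 / L := hs
        nlinarith
      have h3 : s * (2 * ⟪f' (x i), f' (x (i + 1)) - f' (x i)⟫
          + ‖f' (x (i + 1)) - f' (x i)‖ ^ 2) ≤ 0 := by nlinarith
      nlinarith [mul_pos hs0 hs0]
    linarith [e3.le, e3.ge, hkey]
  have hDanti : ∀ i j, i ≤ j → f (x j) - f xstar ≤ f (x i) - f xstar := by
    have h : Antitone (fun k : ℕ => f (x k) - f xstar) :=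
      antitone_nat_of_succ_le (fun k => le_trans (P1 k) (by nlinarith [hgnn k]))
    exact fun i j hij => h hij
  have hganti : ∀ i j, i ≤ j → ‖f' (x j)‖ ^ 2 ≤ ‖f' (x i)‖ ^ 2 := by
    have h : Antitone (fun k : ℕ => ‖f' (x k)‖ ^ 2) := antitone_nat_of_succ_le P3
    exact fun i j hij => h hij
  have S1 := seq_sum1 (fun i => ‖x i - xstar‖ ^ 2) (fun i => f (x i) - f xstar) s P2
  have S1' : ∀ k : ℕ, ∑ i ∈ Finset.range k, (f (x i) - f xstar)
      ≤ ‖x 0 - xstar‖ ^ 2 / (2 * s) := by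
    intro k
    have h := S1 k
    have hrk : (0:ℝ) ≤ ‖x k - xstar‖ ^ 2 := sq_nonneg _
    rw [le_div_iff₀ (by positivity)]
    linarith
  have S2' := seq_sum2 (fun i => f (x i) - f xstar) (fun i => ‖f' (x i)‖ ^ 2) s hs0.le P1
  have part1 := part1_arith (fun i => f (x i) - f xstar) (‖x 0 - xstar‖ ^ 2) s hs0
    hDanti S1'
  have part2 := part2_arith (fun i => f (x i) - f xstar) (fun i => ‖f' (x i)‖ ^ 2)
    (‖x 0 - xstar‖ ^ 2) s hs0 hDnn hgnn hganti S2' S1'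
  exact ⟨fun k hk => part1 k hk, fun k => ⟨k, le_refl k, part2 k⟩⟩
end
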